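/- arXiv:1507.01234 — 4 statements merged into one kernel-verified Lean document; each statement's English description precedes it below -/
import Mathlib

section
/- Let {X_n} be a Markov chain on a finite alphabet A with all-positive transition matrix Q whose stationary distribution π is uniform on A (equivalently, Q is doubly stochastic). Then the asymptotic variance σ² = lim_{n→∞} (1/n) Var[ log( ∏_{i=1}^n Q(X̄_i|X̄_{i−1}) / π(X̄_i) ) ] equals zero if and only if the random variables {X_n} are i.i.d. with each X_n uniformly distributed on A. -/
open MeasureTheory ProbabilityTheory Filter Finset Topology
open scoped NNReal

noncomputable section

/-- Shannon entropy (natural logarithm) of a probability vector on a finite type. -/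
def ent {T : Type*} [Fintype T] (p : T → ℝ) : ℝ := ∑ t, Real.negMulLog (p t)

/-- `X` is a homogeneous first-order Markov chain with transition matrix `Q`
(and arbitrary initial distribution). -/
def IsMarkov {Ω A : Type*} [MeasurableSpace Ω] (μ : Measure Ω) (X : ℕ → Ω → A)
    (Q : A → A → ℝ) : Prop :=
  ∀ (n : ℕ) (w : Fin (n + 1) → A) (a : A),
    (μ {ω | (∀ i : Fin (n + 1), X (i : ℕ) ω = w i) ∧ X (n + 1) ω = a}).toReal
      = Q (w (Fin.last n)) a * (μ {ω | ∀ i : Fin (n + 1), X (i : ℕ) ω = w i}).toReal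

/-- Bivariate empirical distribution of consecutive pairs of the sample `x 0, …, x n`. -/
def empPair {A : Type*} [DecidableEq A] (x : ℕ → A) (n : ℕ) (a a' : A) : ℝ :=
  (∑ i ∈ Finset.range n, if x i = a ∧ x (i + 1) = a' then (1 : ℝ) else 0) / n

/-- First marginal of the bivariate empirical distribution. -/
def empFst {A : Type*} [Fintype A] [DecidableEq A] (x : ℕ → A) (n : ℕ) (a : A) : ℝ :=
  ∑ a', empPair x n a a'

/-- Second marginal of the bivariate empirical distribution. -/
def empSnd {A : Type*} [Fintype A] [DecidableEq A] (x : ℕ → A) (n : ℕ) (a' : A) : ℝ :=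
  ∑ a, empPair x n a a'

/-- Univariate empirical distribution of the sample `x 0, …, x (n-1)`. -/
def empOne {A : Type*} [DecidableEq A] (x : ℕ → A) (n : ℕ) (a : A) : ℝ :=
  (∑ i ∈ Finset.range n, if x i = a then (1 : ℝ) else 0) / n

/-- The plug-in estimator of the mutual information. -/
def pluginMI {A : Type*} [Fintype A] [DecidableEq A] (x : ℕ → A) (n : ℕ) : ℝ :=
  ent (empFst x n) + ent (empSnd x n) - ent (fun p : A × A => empPair x n p.1 p.2)

/-- The stationary mutual information `I_π(X₀; X₁)` of a chain with transition
matrix `Q` and stationary distribution `π`. -/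
def Ipi {A : Type*} [Fintype A] (Q : A → A → ℝ) (pi : A → ℝ) : ℝ :=
  ∑ a, ∑ a', pi a * Q a a' * Real.log (Q a a' / pi a')

/-- Convergence in distribution of real random variables. -/
def TendstoInDistribution {Ω : Type*} [MeasurableSpace Ω] (μ : Measure Ω)
    (W : ℕ → Ω → ℝ) (ν : Measure ℝ) : Prop :=
  ∀ f : BoundedContinuousFunction ℝ ℝ,
    Tendsto (fun n => ∫ ω, f (W n ω) ∂μ) atTop (𝓝 (∫ x, f x ∂ν))

/-- Chi-squared distribution with `s` degrees of freedom, as the Gamma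
distribution with shape `s/2` and rate `1/2`. -/
def chiSq (s : ℕ) : Measure ℝ := gammaMeasure ((s : ℝ) / 2) (1 / 2)

/-- Irreducibility and aperiodicity of a finite-state chain, expressed as
primitivity of its transition matrix. -/
def Primitive {A : Type*} [Fintype A] [DecidableEq A] (Q : Matrix A A ℝ) : Prop :=
  ∃ N : ℕ, 0 < N ∧ ∀ a a', 0 < (Q ^ N) a a'

/-- Relative entropy (Kullback–Leibler divergence, natural logarithm) between
probability vectors on a finite type. -/
def KLdiv {T : Type*} [Fintype T] (p q : T → ℝ) : ℝ :=
  ∑ t, p t * Real.log (p t / q t)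


set_option linter.unusedSectionVars false
set_option maxHeartbeats 1000000

open scoped ENNReal

namespace KS

variable {B : Type*} [Fintype B]


variable {B : Type*} [Fintype B]

/-- expectation w.r.t. a pmf given as a weight function -/
def Ep (p S : B → ℝ) : ℝ := ∑ b, p b * S b

/-- variance w.r.t. a pmf -/
def Vp (p S : B → ℝ) : ℝ := Ep p (fun b => (S b) ^ 2) - (Ep p S) ^ 2

lemma Vp_eq {p S : B → ℝ} (h1 : ∑ b, p b = 1) :
    Vp p S = ∑ b, p b * (S b - Ep p S) ^ 2 := by
  have h : ∀ b ∈ univ, p b * (S b - Ep p S) ^ 2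
      = p b * (S b) ^ 2 - 2 * Ep p S * (p b * S b) + (Ep p S) ^ 2 * p b := by
    intro b _; ring
  rw [Finset.sum_congr rfl h, Finset.sum_add_distrib, Finset.sum_sub_distrib,
    ← Finset.mul_sum, ← Finset.mul_sum, h1]
  simp only [Vp, Ep]
  ring

lemma Vp_nonneg {p S : B → ℝ} (hp : ∀ b, 0 ≤ p b) (h1 : ∑ b, p b = 1) :
    0 ≤ Vp p S := by
  rw [Vp_eq h1]
  exact Finset.sum_nonneg fun b _ => mul_nonneg (hp b) (sq_nonneg _)

lemma Vp_eq_zero {p S : B → ℝ} (hp : ∀ b, 0 < p b) (h1 : ∑ b, p b = 1)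
    (hV : Vp p S = 0) : ∀ b b', S b = S b' := by
  have h0 : ∀ b ∈ univ, p b * (S b - Ep p S) ^ 2 = 0 := by
    rw [← Finset.sum_eq_zero_iff_of_nonneg
      (fun b _ => mul_nonneg (hp b).le (sq_nonneg _)), ← Vp_eq h1, hV]
  have h : ∀ b : B, S b = Ep p S := by
    intro b
    have := h0 b (mem_univ b)
    have h2 : (S b - Ep p S) ^ 2 = 0 := by
      rcases mul_eq_zero.1 this with h | h
      · exact absurd h (hp b).ne'
      · exact h
    nlinarith [sq_nonneg (S b - Ep p S)]
  intro b b'; rw [h b, h b']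

variable {E : Type*} [Fintype E] [DecidableEq E]

def pE (p : B → ℝ) (c : B → E) (e : E) : ℝ := ∑ b ∈ univ.filter fun b => c b = e, p b

def cp (p : B → ℝ) (c : B → E) (e : E) (b : B) : ℝ :=
  if c b = e then p b / pE p c e else 0

lemma cp_sum {p : B → ℝ} {c : B → E} {e : E} (h : pE p c e ≠ 0) :
    ∑ b, cp p c e b = 1 := by
  simp only [cp]
  rw [← Finset.sum_filter, ← Finset.sum_div, ← pE, div_self h]

lemma totalVar {p S : B → ℝ} {c : B → E} (h1 : ∑ b, p b = 1)
    (hpos : ∀ e, 0 < pE p c e) :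
    ∑ e, pE p c e * Vp (cp p c e) S ≤ Vp p S := by
  set M := Ep p S with hM
  have hfib : Vp p S = ∑ e, ∑ b ∈ univ.filter fun b => c b = e, p b * (S b - M) ^ 2 := by
    rw [Vp_eq h1, ← Finset.sum_fiberwise univ c (fun b => p b * (S b - M) ^ 2)]
  have key : ∀ e, ∑ b ∈ univ.filter fun b => c b = e, p b * (S b - M) ^ 2
      = pE p c e * Vp (cp p c e) S + pE p c e * (Ep (cp p c e) S - M) ^ 2 := by
    intro e
    set Me := Ep (cp p c e) S with hMe
    have hne := (hpos e).ne'
    have hMeq : pE p c e * Me = ∑ b ∈ univ.filter fun b => c b = e, p b * S b := by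
      rw [hMe, Ep, show (∑ b, cp p c e b * S b)
        = ∑ b ∈ univ.filter fun b => c b = e, p b / pE p c e * S b by
          simp only [cp, ite_mul, zero_mul]
          rw [← Finset.sum_filter]]
      rw [Finset.mul_sum]
      refine Finset.sum_congr rfl fun b _ => ?_
      field_simp
    have hVeq : pE p c e * Vp (cp p c e) S
        = ∑ b ∈ univ.filter fun b => c b = e, p b * (S b - Me) ^ 2 := by
      rw [Vp_eq (cp_sum hne), ← hMe, Finset.mul_sum,
        show (∑ b, pE p c e * (cp p c e b * (S b - Me) ^ 2))
        = ∑ b ∈ univ.filter fun b => c b = e,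
            pE p c e * (p b / pE p c e * (S b - Me) ^ 2) by
          simp only [cp, ite_mul, zero_mul, mul_ite, mul_zero]
          rw [← Finset.sum_filter]]
      refine Finset.sum_congr rfl fun b _ => ?_
      field_simp
    have hpE : ∑ b ∈ univ.filter fun b => c b = e, p b = pE p c e := rfl
    have expand : ∀ b ∈ univ.filter fun b => c b = e,
        p b * (S b - M) ^ 2 = p b * (S b - Me) ^ 2
          + (Me - M) * (2 * (p b * S b)) - (Me - M) * (M + Me) * p b := by
      intro b _; ring
    rw [Finset.sum_congr rfl expand, Finset.sum_sub_distrib, Finset.sum_add_distrib,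
      ← Finset.mul_sum, ← Finset.mul_sum, ← Finset.mul_sum, hpE, hVeq]
    rw [← hMeq]
    ring
  rw [hfib]
  rw [Finset.sum_congr rfl fun e _ => key e]
  refine Finset.sum_le_sum fun e _ => ?_
  nlinarith [(hpos e).le, sq_nonneg (Ep (cp p c e) S - M)]


section Pullback
variable {C : Type*} [Fintype C] [DecidableEq B]

lemma Ep_pullback (ψ : C → B) (hinj : Function.Injective ψ) (p S : B → ℝ)
    (hz : ∀ b, (∀ c, ψ c ≠ b) → p b = 0) : Ep p S = Ep (p ∘ ψ) (S ∘ ψ) := by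
  rw [Ep, Ep]
  have himg : ∑ b ∈ Finset.image ψ univ, p b * S b = ∑ c, (p ∘ ψ) c * (S ∘ ψ) c :=
    Finset.sum_image (fun x _ y _ h => hinj h)
  rw [← himg]
  refine (Finset.sum_subset (Finset.subset_univ (Finset.image ψ univ)) fun b _ hb => ?_).symm
  rw [hz b, zero_mul]
  intro c
  intro hc
  exact hb (Finset.mem_image.2 ⟨c, Finset.mem_univ c, hc⟩)

lemma Vp_pullback (ψ : C → B) (hinj : Function.Injective ψ) (p S : B → ℝ)
    (hz : ∀ b, (∀ c, ψ c ≠ b) → p b = 0) : Vp p S = Vp (p ∘ ψ) (S ∘ ψ) := by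
  rw [Vp, Vp, Ep_pullback ψ hinj p S hz,
    Ep_pullback ψ hinj p (fun b => S b ^ 2) hz]
  rfl

end Pullback

variable {A : Type*} [Fintype A] [DecidableEq A] {m : ℕ}

lemma coord1 (k : Fin m → A → ℝ) (hk : ∀ j, ∑ b, k j b = 1) (i : Fin m) (φ : A → ℝ) :
    ∑ o : Fin m → A, (∏ j, k j (o j)) * φ (o i) = ∑ b, k i b * φ b := by
  have h1 : ∀ o : Fin m → A,
      (∏ j, k j (o j) * (if j = i then φ (o j) else 1)) = (∏ j, k j (o j)) * φ (o i) := by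
    intro o
    rw [Finset.prod_mul_distrib]
    congr 1
    simp [Finset.prod_ite_eq']
  have h2 : ∀ j, (∑ b, k j b * (if j = i then φ b else 1))
      = if j = i then ∑ b, k i b * φ b else 1 := by
    intro j
    by_cases hj : j = i
    · subst hj; simp
    · simp [hj, hk j]
  calc ∑ o : Fin m → A, (∏ j, k j (o j)) * φ (o i)
      = ∑ o : Fin m → A, ∏ j, k j (o j) * (if j = i then φ (o j) else 1) := by
        exact Finset.sum_congr rfl fun o _ => (h1 o).symm
    _ = ∏ j, ∑ b, k j b * (if j = i then φ b else 1) :=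
        (Fintype.prod_sum (κ := fun _ : Fin m => A)
          (fun j b => k j b * (if j = i then φ b else 1))).symm
    _ = ∏ j, (if j = i then ∑ b, k i b * φ b else 1) := by
        exact Finset.prod_congr rfl fun j _ => h2 j
    _ = ∑ b, k i b * φ b := by simp [Finset.prod_ite_eq']

lemma coord2 (k : Fin m → A → ℝ) (hk : ∀ j, ∑ b, k j b = 1) (i j : Fin m) (hij : i ≠ j)
    (φ ψ : A → ℝ) :
    ∑ o : Fin m → A, (∏ j', k j' (o j')) * (φ (o i) * ψ (o j))
      = (∑ b, k i b * φ b) * (∑ b, k j b * ψ b) := by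
  have h1 : ∀ o : Fin m → A,
      (∏ j', k j' (o j') * ((if j' = i then φ (o j') else 1) * (if j' = j then ψ (o j') else 1)))
        = (∏ j', k j' (o j')) * (φ (o i) * ψ (o j)) := by
    intro o
    rw [Finset.prod_mul_distrib, Finset.prod_mul_distrib]
    simp [Finset.prod_ite_eq']
  have h2 : ∀ j', (∑ b, k j' b * ((if j' = i then φ b else 1) * (if j' = j then ψ b else 1)))
      = if j' = i then (∑ b, k i b * φ b) else if j' = j then (∑ b, k j b * ψ b) else 1 := by
    intro j'
    by_cases h : j' = i
    · subst h; simp [hij]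
    · by_cases h' : j' = j
      · subst h'; simp [h]
      · simp [h, h', hk j']
  calc ∑ o : Fin m → A, (∏ j', k j' (o j')) * (φ (o i) * ψ (o j))
      = ∑ o : Fin m → A, ∏ j', k j' (o j')
          * ((if j' = i then φ (o j') else 1) * (if j' = j then ψ (o j') else 1)) :=
        Finset.sum_congr rfl fun o _ => (h1 o).symm
    _ = ∏ j', ∑ b, k j' b * ((if j' = i then φ b else 1) * (if j' = j then ψ b else 1)) :=
        (Fintype.prod_sum (κ := fun _ : Fin m => A)
          (fun j' b => k j' b * ((if j' = i then φ b else 1) * (if j' = j then ψ b else 1)))).symm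
    _ = ∏ j', (if j' = i then (∑ b, k i b * φ b)
          else if j' = j then (∑ b, k j b * ψ b) else 1) :=
        Finset.prod_congr rfl fun j' _ => h2 j'
    _ = (∑ b, k i b * φ b) * (∑ b, k j b * ψ b) := by
        rw [← Finset.mul_prod_erase univ _ (mem_univ i), if_pos rfl,
          ← Finset.mul_prod_erase (univ.erase i) _
            (Finset.mem_erase.2 ⟨fun h => hij h.symm, mem_univ j⟩),
          if_neg (fun h => hij h.symm), if_pos rfl, Finset.prod_eq_one, mul_one]
        intro x hx
        rw [Finset.mem_erase, Finset.mem_erase] at hx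
        rw [if_neg hx.2.1, if_neg hx.1]

lemma indepVar (k : Fin m → A → ℝ) (hk : ∀ j, ∑ b, k j b = 1) (h : Fin m → A → ℝ) :
    Vp (fun o : Fin m → A => ∏ j, k j (o j)) (fun o => ∑ j, h j (o j))
      = ∑ j, Vp (k j) (h j) := by
  set Ei : Fin m → ℝ := fun i => ∑ b, k i b * h i b with hEi
  have hmean : Ep (fun o : Fin m → A => ∏ j, k j (o j)) (fun o => ∑ j, h j (o j))
      = ∑ i, Ei i := by
    rw [Ep]
    calc ∑ o : Fin m → A, (∏ j, k j (o j)) * ∑ i, h i (o i)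
        = ∑ o : Fin m → A, ∑ i, (∏ j, k j (o j)) * h i (o i) := by
          exact Finset.sum_congr rfl fun o _ => Finset.mul_sum _ _ _
      _ = ∑ i, ∑ o : Fin m → A, (∏ j, k j (o j)) * h i (o i) := Finset.sum_comm
      _ = ∑ i, Ei i := Finset.sum_congr rfl fun i _ => coord1 k hk i (h i)
  have hsq : Ep (fun o : Fin m → A => ∏ j, k j (o j)) (fun o => (∑ j, h j (o j)) ^ 2)
      = ∑ i, ∑ j, (if i = j then ∑ b, k i b * (h i b * h i b) else Ei i * Ei j) := by
    rw [Ep]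
    calc ∑ o : Fin m → A, (∏ j, k j (o j)) * (∑ i, h i (o i)) ^ 2
        = ∑ o : Fin m → A, ∑ i, ∑ j, (∏ j', k j' (o j')) * (h i (o i) * h j (o j)) := by
          refine Finset.sum_congr rfl fun o _ => ?_
          rw [sq, Finset.sum_mul_sum, Finset.mul_sum]
          exact Finset.sum_congr rfl fun i _ => Finset.mul_sum _ _ _
      _ = ∑ i, ∑ o : Fin m → A, ∑ j, (∏ j', k j' (o j')) * (h i (o i) * h j (o j)) :=
          Finset.sum_comm
      _ = ∑ i, ∑ j, ∑ o : Fin m → A, (∏ j', k j' (o j')) * (h i (o i) * h j (o j)) :=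
          Finset.sum_congr rfl fun i _ => Finset.sum_comm
      _ = ∑ i, ∑ j, (if i = j then ∑ b, k i b * (h i b * h i b) else Ei i * Ei j) := by
          refine Finset.sum_congr rfl fun i _ => Finset.sum_congr rfl fun j _ => ?_
          by_cases hij : i = j
          · subst hij
            rw [if_pos rfl]
            exact coord1 k hk i (fun b => h i b * h i b)
          · rw [if_neg hij]
            exact coord2 k hk i j hij (h i) (h j)
  rw [Vp, hmean, hsq, sq, Finset.sum_mul_sum]
  rw [← Finset.sum_sub_distrib]
  refine Finset.sum_congr rfl fun i _ => ?_
  rw [← Finset.sum_sub_distrib]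
  rw [Finset.sum_eq_single i (fun j _ hj => by rw [if_neg fun h => hj h.symm, sub_self])
    (fun h => absurd (mem_univ i) h)]
  rw [if_pos rfl, Vp, Ep, Ep, sq]
  congr 1
  exact Finset.sum_congr rfl fun b _ => by ring

/-- i-th coordinate of a tuple, with out-of-range wraparound. -/
def nth {n : ℕ} (w : Fin (n + 1) → A) (i : ℕ) : A :=
  w ⟨i % (n + 1), Nat.mod_lt _ (Nat.succ_pos n)⟩

lemma nth_eq {n : ℕ} (w : Fin (n + 1) → A) {i : ℕ} (h : i < n + 1) :
    nth w i = w ⟨i, h⟩ := by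
  simp only [nth]
  congr 1
  exact Fin.ext (Nat.mod_eq_of_lt h)

def kp (Q : A → A → ℝ) (n : ℕ) (w : Fin (n + 1) → A) : ℝ :=
  ∏ i ∈ range n, Q (nth w i) (nth w (i + 1))

def pathP (r : A → ℝ) (Q : A → A → ℝ) (n : ℕ) (w : Fin (n + 1) → A) : ℝ :=
  r (nth w 0) * kp Q n w

def pathS (f : A → A → ℝ) (n : ℕ) (w : Fin (n + 1) → A) : ℝ :=
  ∑ i ∈ range n, f (nth w i) (nth w (i + 1))

/-- snoc equivalence -/
def snocEquiv (n : ℕ) : ((Fin n → A) × A) ≃ (Fin (n + 1) → A) where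
  toFun p := Fin.snoc p.1 p.2
  invFun w := (Fin.init w, w (Fin.last n))
  left_inv p := by simp [Fin.init_snoc, Fin.snoc_last]
  right_inv w := by simp [Fin.snoc_init_self]

def consEquiv (n : ℕ) : (A × (Fin n → A)) ≃ (Fin (n + 1) → A) where
  toFun p := Fin.cons p.1 p.2
  invFun w := (w 0, Fin.tail w)
  left_inv p := by simp [Fin.tail_cons]
  right_inv w := by simp [Fin.cons_self_tail]

lemma sum_snoc {n : ℕ} (F : (Fin (n + 1) → A) → ℝ) :
    ∑ w : Fin (n + 1) → A, F w = ∑ w : Fin n → A, ∑ a, F (Fin.snoc w a) := by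
  rw [← Equiv.sum_comp (snocEquiv n) F, Fintype.sum_prod_type]
  rfl

lemma sum_cons {n : ℕ} (F : (Fin (n + 1) → A) → ℝ) :
    ∑ w : Fin (n + 1) → A, F w = ∑ a, ∑ w : Fin n → A, F (Fin.cons a w) := by
  rw [← Equiv.sum_comp (consEquiv n) F, Fintype.sum_prod_type]
  rfl

lemma nth_snoc {n : ℕ} (w : Fin (n + 1) → A) (a : A) {i : ℕ} (h : i < n + 1) :
    nth (Fin.snoc w a : Fin (n + 2) → A) i = nth w i := by
  rw [nth_eq _ (by omega : i < n + 2), nth_eq _ h]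
  have : (⟨i, by omega⟩ : Fin (n + 2)) = Fin.castSucc ⟨i, h⟩ := rfl
  rw [this, Fin.snoc_castSucc]

lemma nth_snoc_last {n : ℕ} (w : Fin (n + 1) → A) (a : A) :
    nth (Fin.snoc w a : Fin (n + 2) → A) (n + 1) = a := by
  rw [nth_eq _ (by omega)]
  have : (⟨n + 1, by omega⟩ : Fin (n + 2)) = Fin.last (n + 1) := rfl
  rw [this, Fin.snoc_last]

lemma nth_cons_succ {n : ℕ} (w : Fin (n + 1) → A) (a : A) {i : ℕ} (h : i < n + 1) :
    nth (Fin.cons a w : Fin (n + 2) → A) (i + 1) = nth w i := by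
  rw [nth_eq _ (by omega : i + 1 < n + 2), nth_eq _ h]
  have : (⟨i + 1, by omega⟩ : Fin (n + 2)) = Fin.succ ⟨i, h⟩ := rfl
  rw [this, Fin.cons_succ]

lemma nth_cons_zero {n : ℕ} (w : Fin (n + 1) → A) (a : A) :
    nth (Fin.cons a w : Fin (n + 2) → A) 0 = a := by
  rw [nth_eq _ (by omega)]
  simp [show (⟨0, by omega⟩ : Fin (n + 2)) = 0 from rfl]

lemma kp_snoc (Q : A → A → ℝ) {n : ℕ} (w : Fin (n + 1) → A) (a : A) :
    kp Q (n + 1) (Fin.snoc w a) = kp Q n w * Q (nth w n) a := by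
  rw [kp, prod_range_succ, kp]
  congr 1
  · refine Finset.prod_congr rfl fun i hi => ?_
    rw [mem_range] at hi
    rw [nth_snoc w a (by omega), nth_snoc w a (by omega)]
  · rw [nth_snoc w a (by omega), nth_snoc_last]

lemma kp_cons (Q : A → A → ℝ) {n : ℕ} (w : Fin (n + 1) → A) (a : A) :
    kp Q (n + 1) (Fin.cons a w) = Q a (nth w 0) * kp Q n w := by
  rw [kp, prod_range_succ', kp]
  rw [nth_cons_zero, nth_cons_succ w a (by omega)]
  rw [mul_comm]
  congr 1
  refine Finset.prod_congr rfl fun i hi => ?_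
  rw [mem_range] at hi
  rw [nth_cons_succ w a (by omega), nth_cons_succ w a (by omega)]

lemma pathP_snoc (r : A → ℝ) (Q : A → A → ℝ) {n : ℕ} (w : Fin (n + 1) → A) (a : A) :
    pathP r Q (n + 1) (Fin.snoc w a) = pathP r Q n w * Q (nth w n) a := by
  rw [pathP, pathP, kp_snoc, nth_snoc w a (by omega), mul_assoc]

lemma pathS_snoc (f : A → A → ℝ) {n : ℕ} (w : Fin (n + 1) → A) (a : A) :
    pathS f (n + 1) (Fin.snoc w a) = pathS f n w + f (nth w n) a := by
  rw [pathS, sum_range_succ, pathS]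
  congr 1
  · refine Finset.sum_congr rfl fun i hi => ?_
    rw [mem_range] at hi
    rw [nth_snoc w a (by omega), nth_snoc w a (by omega)]
  · rw [nth_snoc w a (by omega), nth_snoc_last]

lemma sum_nth0 (G : A → ℝ) : ∑ w : Fin 1 → A, G (nth w 0) = ∑ a, G a := by
  refine Fintype.sum_equiv (Equiv.funUnique (Fin 1) A) _ _ fun w => ?_
  rw [nth_eq _ (by omega)]
  rfl

lemma sum_pathP (r : A → ℝ) (Q : A → A → ℝ) (hQrow : ∀ a, ∑ a', Q a a' = 1) (n : ℕ) :
    ∑ w : Fin (n + 1) → A, pathP r Q n w = ∑ a, r a := by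
  induction n with
  | zero =>
    simp only [pathP, kp, range_zero, prod_empty, mul_one]
    exact sum_nth0 r
  | succ n ih =>
    rw [sum_snoc (pathP r Q (n + 1))]
    calc ∑ w : Fin (n + 1) → A, ∑ a, pathP r Q (n + 1) (Fin.snoc w a)
        = ∑ w : Fin (n + 1) → A, pathP r Q n w := by
          refine Finset.sum_congr rfl fun w _ => ?_
          simp only [pathP_snoc, ← Finset.mul_sum, hQrow, mul_one]
      _ = ∑ a, r a := ih

lemma pathP_pos {r : A → ℝ} {Q : A → A → ℝ} (hr : ∀ a, 0 < r a)
    (hQ : ∀ a a', 0 < Q a a') (n : ℕ) (w : Fin (n + 1) → A) : 0 < pathP r Q n w :=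
  mul_pos (hr _) (Finset.prod_pos fun _ _ => hQ _ _)


section Interleave
variable {m : ℕ}

def itl (m : ℕ) (e : Fin (m + 1) → A) (o : Fin m → A) : Fin (2 * m + 1) → A :=
  fun i => if h : (i : ℕ) % 2 = 0
    then e ⟨(i : ℕ) / 2, by have := i.isLt; omega⟩
    else o ⟨(i : ℕ) / 2, by have := i.isLt; omega⟩

lemma itl_even (e : Fin (m + 1) → A) (o : Fin m → A) {j : ℕ} (hj : j < m + 1) :
    nth (itl m e o) (2 * j) = nth e j := by
  rw [nth_eq _ (by omega : 2 * j < 2 * m + 1), nth_eq _ hj]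
  simp only [itl]
  rw [dif_pos (by omega)]
  congr 1
  exact Fin.ext (by first | (simp; omega) | simp | omega)

lemma itl_odd (e : Fin (m + 1) → A) (o : Fin m → A) {j : ℕ} (hj : j < m) :
    nth (itl m e o) (2 * j + 1) = o ⟨j, hj⟩ := by
  rw [nth_eq _ (by omega : 2 * j + 1 < 2 * m + 1)]
  simp only [itl]
  rw [dif_neg (by omega)]
  congr 1
  exact Fin.ext (by first | (simp; omega) | simp | omega)

def evens (m : ℕ) (w : Fin (2 * m + 1) → A) : Fin (m + 1) → A :=
  fun j => w ⟨2 * (j : ℕ), by have := j.isLt; omega⟩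

def odds (m : ℕ) (w : Fin (2 * m + 1) → A) : Fin m → A :=
  fun j => w ⟨2 * (j : ℕ) + 1, by have := j.isLt; omega⟩

lemma evens_itl (e : Fin (m + 1) → A) (o : Fin m → A) : evens m (itl m e o) = e := by
  funext j
  have h := itl_even e o j.isLt
  rw [nth_eq _ (by have := j.isLt; omega), nth_eq _ j.isLt] at h
  simpa [evens] using h

lemma odds_itl (e : Fin (m + 1) → A) (o : Fin m → A) : odds m (itl m e o) = o := by
  funext j
  have h := itl_odd e o j.isLt
  rw [nth_eq _ (by have := j.isLt; omega)] at h
  simpa [odds] using h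

lemma itl_evens_odds (w : Fin (2 * m + 1) → A) : itl m (evens m w) (odds m w) = w := by
  funext i
  have hi := i.isLt
  by_cases h : (i : ℕ) % 2 = 0
  · rw [itl, dif_pos h]
    simp only [evens]
    exact congrArg w (Fin.ext (by first | (simp; omega) | simp | omega))
  · rw [itl, dif_neg h]
    simp only [odds]
    exact congrArg w (Fin.ext (by first | (simp; omega) | simp | omega))

lemma itl_inj (e : Fin (m + 1) → A) : Function.Injective (itl m e) := by
  intro o o' h
  rw [← odds_itl e o, h, odds_itl]

lemma prod_range_double (g : ℕ → ℝ) (m : ℕ) :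
    ∏ i ∈ range (2 * m), g i = ∏ j ∈ range m, (g (2 * j) * g (2 * j + 1)) := by
  induction m with
  | zero => simp
  | succ m ih =>
    rw [show 2 * (m + 1) = (2 * m + 1) + 1 by ring, prod_range_succ, prod_range_succ,
      ih, prod_range_succ]
    ring

lemma sum_range_double (g : ℕ → ℝ) (m : ℕ) :
    ∑ i ∈ range (2 * m), g i = ∑ j ∈ range m, (g (2 * j) + g (2 * j + 1)) := by
  induction m with
  | zero => simp
  | succ m ih =>
    rw [show 2 * (m + 1) = (2 * m + 1) + 1 by ring, sum_range_succ, sum_range_succ,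
      ih, sum_range_succ]
    ring

lemma kp_itl (Q : A → A → ℝ) (e : Fin (m + 1) → A) (o : Fin m → A) :
    kp Q (2 * m) (itl m e o)
      = ∏ j : Fin m, (Q (nth e (j : ℕ)) (o j) * Q (o j) (nth e ((j : ℕ) + 1))) := by
  rw [kp, prod_range_double, ← Fin.prod_univ_eq_prod_range
    (fun j => Q (nth (itl m e o) (2 * j)) (nth (itl m e o) (2 * j + 1))
      * Q (nth (itl m e o) (2 * j + 1)) (nth (itl m e o) (2 * j + 1 + 1))) m]
  refine Finset.prod_congr rfl fun j _ => ?_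
  have hj := j.isLt
  have h1 : nth (itl m e o) (2 * (j : ℕ)) = nth e (j : ℕ) := itl_even e o (by omega)
  have h2 : nth (itl m e o) (2 * (j : ℕ) + 1) = o j := by
    rw [itl_odd e o hj]
  have h3 : nth (itl m e o) (2 * (j : ℕ) + 1 + 1) = nth e ((j : ℕ) + 1) := by
    rw [show 2 * (j : ℕ) + 1 + 1 = 2 * ((j : ℕ) + 1) by ring]
    exact itl_even e o (by omega)
  rw [h1, h2, h3]

lemma pathS_itl (f : A → A → ℝ) (e : Fin (m + 1) → A) (o : Fin m → A) :
    pathS f (2 * m) (itl m e o)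
      = ∑ j : Fin m, (f (nth e (j : ℕ)) (o j) + f (o j) (nth e ((j : ℕ) + 1))) := by
  rw [pathS, sum_range_double, ← Fin.sum_univ_eq_sum_range
    (fun j => f (nth (itl m e o) (2 * j)) (nth (itl m e o) (2 * j + 1))
      + f (nth (itl m e o) (2 * j + 1)) (nth (itl m e o) (2 * j + 1 + 1))) m]
  refine Finset.sum_congr rfl fun j _ => ?_
  have hj := j.isLt
  have h1 : nth (itl m e o) (2 * (j : ℕ)) = nth e (j : ℕ) := itl_even e o (by omega)
  have h2 : nth (itl m e o) (2 * (j : ℕ) + 1) = o j := by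
    rw [itl_odd e o hj]
  have h3 : nth (itl m e o) (2 * (j : ℕ) + 1 + 1) = nth e ((j : ℕ) + 1) := by
    rw [show 2 * (j : ℕ) + 1 + 1 = 2 * ((j : ℕ) + 1) by ring]
    exact itl_even e o (by omega)
  rw [h1, h2, h3]

lemma pathP_itl (r : A → ℝ) (Q : A → A → ℝ) (e : Fin (m + 1) → A) (o : Fin m → A) :
    pathP r Q (2 * m) (itl m e o)
      = r (nth e 0)
        * ∏ j : Fin m, (Q (nth e (j : ℕ)) (o j) * Q (o j) (nth e ((j : ℕ) + 1))) := by
  rw [pathP, kp_itl]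
  congr 1
  rw [show (0 : ℕ) = 2 * 0 by ring, itl_even e o (by omega)]

end Interleave

section Marg
variable (R : A → A → ℝ) (r : A → ℝ)

lemma sum_fin2 (F : A → A → ℝ) :
    ∑ e : Fin 2 → A, F (nth e 0) (nth e 1) = ∑ a, ∑ c, F a c := by
  rw [sum_cons (fun e => F (nth e 0) (nth e 1))]
  refine Finset.sum_congr rfl fun a _ => ?_
  have h1 : ∀ w : Fin 1 → A, nth (Fin.cons a w : Fin 2 → A) 0 = a :=
    fun w => nth_cons_zero w a
  have h2 : ∀ w : Fin 1 → A, nth (Fin.cons a w : Fin 2 → A) 1 = nth w 0 :=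
    fun w => nth_cons_succ w a (by omega)
  calc ∑ w : Fin 1 → A, F (nth (Fin.cons a w) 0) (nth (Fin.cons a w) 1)
      = ∑ w : Fin 1 → A, F a (nth w 0) := by
        exact Finset.sum_congr rfl fun w _ => by rw [h1 w, h2 w]
    _ = ∑ c, F a c := sum_nth0 (F a)

lemma lastPair (hhead : ∀ b, ∑ a, r a * R a b = r b) (g : A → A → ℝ) :
    ∀ j : ℕ, ∑ e : Fin (j + 2) → A, pathP r R (j + 1) e * g (nth e j) (nth e (j + 1))
      = ∑ a, ∑ c, r a * R a c * g a c := by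
  intro j
  induction j with
  | zero =>
    calc ∑ e : Fin 2 → A, pathP r R 1 e * g (nth e 0) (nth e 1)
        = ∑ e : Fin 2 → A, r (nth e 0) * R (nth e 0) (nth e 1) * g (nth e 0) (nth e 1) := by
          refine Finset.sum_congr rfl fun e _ => ?_
          rw [pathP, kp, prod_range_one]
      _ = ∑ a, ∑ c, r a * R a c * g a c := sum_fin2 (fun a c => r a * R a c * g a c)
  | succ j ih =>
    rw [sum_cons (fun e => pathP r R (j + 2) e * g (nth e (j + 1)) (nth e (j + 2)))]
    calc ∑ a, ∑ w : Fin (j + 2) → A, pathP r R (j + 2) (Fin.cons a w)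
            * g (nth (Fin.cons a w) (j + 1)) (nth (Fin.cons a w) (j + 2))
        = ∑ a, ∑ w : Fin (j + 2) → A, (r a * R a (nth w 0))
            * (kp R (j + 1) w * g (nth w j) (nth w (j + 1))) := by
          refine Finset.sum_congr rfl fun a _ => Finset.sum_congr rfl fun w _ => ?_
          rw [pathP, kp_cons, nth_cons_zero, nth_cons_succ w a (by omega),
            nth_cons_succ w a (by omega)]
          ring
      _ = ∑ w : Fin (j + 2) → A, (∑ a, r a * R a (nth w 0))
            * (kp R (j + 1) w * g (nth w j) (nth w (j + 1))) := by
          rw [Finset.sum_comm]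
          exact Finset.sum_congr rfl fun w _ => (Finset.sum_mul _ _ _).symm
      _ = ∑ w : Fin (j + 2) → A, pathP r R (j + 1) w * g (nth w j) (nth w (j + 1)) := by
          refine Finset.sum_congr rfl fun w _ => ?_
          rw [hhead, pathP, mul_assoc]
      _ = ∑ a, ∑ c, r a * R a c * g a c := ih

lemma pairMarg (hrow : ∀ a, ∑ c, R a c = 1) (hhead : ∀ b, ∑ a, r a * R a b = r b)
    (g : A → A → ℝ) :
    ∀ m j, j < m → ∑ e : Fin (m + 1) → A, pathP r R m e * g (nth e j) (nth e (j + 1))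
      = ∑ a, ∑ c, r a * R a c * g a c := by
  intro m
  induction m with
  | zero => intro j hj; omega
  | succ m ih =>
    intro j hj
    rcases Nat.lt_succ_iff_lt_or_eq.1 hj with h | h
    · rw [sum_snoc (fun e => pathP r R (m + 1) e * g (nth e j) (nth e (j + 1)))]
      calc ∑ w : Fin (m + 1) → A, ∑ a, pathP r R (m + 1) (Fin.snoc w a)
              * g (nth (Fin.snoc w a) j) (nth (Fin.snoc w a) (j + 1))
          = ∑ w : Fin (m + 1) → A, pathP r R m w * g (nth w j) (nth w (j + 1)) := by
            refine Finset.sum_congr rfl fun w _ => ?_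
            have h1 : ∀ a : A, nth (Fin.snoc w a : Fin (m + 2) → A) j = nth w j :=
              fun a => nth_snoc w a (by omega)
            have h2 : ∀ a : A, nth (Fin.snoc w a : Fin (m + 2) → A) (j + 1) = nth w (j + 1) :=
              fun a => nth_snoc w a (by omega)
            simp only [pathP_snoc]
            calc ∑ a, pathP r R m w * R (nth w m) a
                    * g (nth (Fin.snoc w a) j) (nth (Fin.snoc w a) (j + 1))
                = ∑ a, (pathP r R m w * g (nth w j) (nth w (j + 1))) * R (nth w m) a := by
                  refine Finset.sum_congr rfl fun a _ => ?_
                  rw [h1 a, h2 a]; ring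
              _ = pathP r R m w * g (nth w j) (nth w (j + 1)) := by
                  rw [← Finset.mul_sum, hrow, mul_one]
        _ = ∑ a, ∑ c, r a * R a c * g a c := ih j h
    · subst h
      exact lastPair R r hhead g j

end Marg


section Main
variable (Q f : A → A → ℝ) (r : A → ℝ)

def Q2 (Q : A → A → ℝ) (a c : A) : ℝ := ∑ b, Q a b * Q b c

def varb (a c : A) : ℝ :=
  Vp (fun b => Q a b * Q b c / Q2 Q a c) (fun b => f a b + f b c)

lemma mainLB [Nonempty A] (hQpos : ∀ a a', 0 < Q a a') (hQrow : ∀ a, ∑ a', Q a a' = 1)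
    (hr : ∀ a, 0 < r a) (hrsum : ∑ a, r a = 1)
    (hhead : ∀ b, ∑ a, r a * Q2 Q a b = r b) (m : ℕ) :
    (m : ℝ) * (∑ a, ∑ c, r a * Q2 Q a c * varb Q f a c)
      ≤ Vp (pathP r Q (2 * m)) (pathS f (2 * m)) := by
  have hRpos : ∀ a c, 0 < Q2 Q a c := fun a c =>
    Finset.sum_pos (fun b _ => mul_pos (hQpos a b) (hQpos b c)) univ_nonempty
  have hRrow : ∀ a, ∑ c, Q2 Q a c = 1 := by
    intro a
    rw [show (∑ c, Q2 Q a c) = ∑ b, ∑ c, Q a b * Q b c from Finset.sum_comm]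
    calc ∑ b, ∑ c, Q a b * Q b c = ∑ b, Q a b * ∑ c, Q b c := by
          exact Finset.sum_congr rfl fun b _ => (Finset.mul_sum _ _ _).symm
      _ = 1 := by simp only [hQrow, mul_one]
  have h1 : ∑ w : Fin (2 * m + 1) → A, pathP r Q (2 * m) w = 1 := by
    rw [sum_pathP r Q hQrow (2 * m), hrsum]
  have hkpR : ∀ e : Fin (m + 1) → A, pathP r (Q2 Q) m e
      = r (nth e 0) * ∏ j : Fin m, Q2 Q (nth e (j : ℕ)) (nth e ((j : ℕ) + 1)) := by
    intro e
    rw [pathP, kp, ← Fin.prod_univ_eq_prod_range (fun i => Q2 Q (nth e i) (nth e (i + 1))) m]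
  have hfiber : ∀ e : Fin (m + 1) → A,
      pE (pathP r Q (2 * m)) (evens m) e = pathP r (Q2 Q) m e := by
    intro e
    have himg : univ.filter (fun w => evens m w = e) = Finset.image (itl m e) univ := by
      ext w
      simp only [mem_filter, mem_univ, true_and, mem_image]
      constructor
      · intro h
        exact ⟨odds m w, by rw [← h]; exact itl_evens_odds w⟩
      · rintro ⟨o, _, rfl⟩
        exact evens_itl e o
    rw [pE, himg, Finset.sum_image (fun x _ y _ h => itl_inj e h)]
    calc ∑ o : Fin m → A, pathP r Q (2 * m) (itl m e o)
        = ∑ o : Fin m → A, r (nth e 0)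
            * ∏ j : Fin m, (Q (nth e (j : ℕ)) (o j) * Q (o j) (nth e ((j : ℕ) + 1))) :=
          Finset.sum_congr rfl fun o _ => pathP_itl r Q e o
      _ = r (nth e 0) * ∑ o : Fin m → A,
            ∏ j : Fin m, (Q (nth e (j : ℕ)) (o j) * Q (o j) (nth e ((j : ℕ) + 1))) :=
          (Finset.mul_sum _ _ _).symm
      _ = r (nth e 0) * ∏ j : Fin m, ∑ b, Q (nth e (j : ℕ)) b * Q b (nth e ((j : ℕ) + 1)) := by
          rw [← Fintype.prod_sum (κ := fun _ : Fin m => A)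
            (fun j b => Q (nth e (j : ℕ)) b * Q b (nth e ((j : ℕ) + 1)))]
      _ = pathP r (Q2 Q) m e := by rw [hkpR e]; rfl
  have hpEpos : ∀ e : Fin (m + 1) → A, 0 < pE (pathP r Q (2 * m)) (evens m) e := by
    intro e
    rw [hfiber e]
    exact pathP_pos hr hRpos m e
  have hVcp : ∀ e : Fin (m + 1) → A,
      Vp (cp (pathP r Q (2 * m)) (evens m) e) (pathS f (2 * m))
        = ∑ j : Fin m, varb Q f (nth e (j : ℕ)) (nth e ((j : ℕ) + 1)) := by
    intro e
    have hz : ∀ w, (∀ o, itl m e o ≠ w) → cp (pathP r Q (2 * m)) (evens m) e w = 0 := by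
      intro w hw
      rw [cp, if_neg]
      intro h
      exact hw (odds m w) (by rw [← h]; exact itl_evens_odds w)
    rw [Vp_pullback (itl m e) (itl_inj e) _ _ hz]
    have hcp : (cp (pathP r Q (2 * m)) (evens m) e) ∘ (itl m e)
        = fun o : Fin m → A => ∏ j : Fin m,
            (fun b => Q (nth e (j : ℕ)) b * Q b (nth e ((j : ℕ) + 1))
              / Q2 Q (nth e (j : ℕ)) (nth e ((j : ℕ) + 1))) (o j) := by
      funext o
      show (if evens m (itl m e o) = e then pathP r Q (2 * m) (itl m e o)
          / pE (pathP r Q (2 * m)) (evens m) e else 0) = _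
      rw [if_pos (evens_itl e o), hfiber e, pathP_itl, hkpR e,
        mul_div_mul_left _ _ (hr (nth e 0)).ne']
      exact (Finset.prod_div_distrib
        (f := fun j : Fin m => Q (nth e (j : ℕ)) (o j) * Q (o j) (nth e ((j : ℕ) + 1)))
        (g := fun j : Fin m => Q2 Q (nth e (j : ℕ)) (nth e ((j : ℕ) + 1)))).symm
    have hS : (pathS f (2 * m)) ∘ (itl m e)
        = fun o : Fin m → A => ∑ j : Fin m,
            (fun b => f (nth e (j : ℕ)) b + f b (nth e ((j : ℕ) + 1))) (o j) :=
      funext fun o => pathS_itl f e o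
    rw [hcp, hS]
    exact indepVar
      (fun j b => Q (nth e (j : ℕ)) b * Q b (nth e ((j : ℕ) + 1))
        / Q2 Q (nth e (j : ℕ)) (nth e ((j : ℕ) + 1)))
      (fun j => by
        rw [← Finset.sum_div]
        exact div_self (hRpos _ _).ne')
      (fun j b => f (nth e (j : ℕ)) b + f b (nth e ((j : ℕ) + 1)))
  calc (m : ℝ) * (∑ a, ∑ c, r a * Q2 Q a c * varb Q f a c)
      = ∑ _j : Fin m, (∑ a, ∑ c, r a * Q2 Q a c * varb Q f a c) := by
        rw [Finset.sum_const, card_univ, Fintype.card_fin, nsmul_eq_mul]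
    _ = ∑ j : Fin m, ∑ e : Fin (m + 1) → A,
          pathP r (Q2 Q) m e * varb Q f (nth e (j : ℕ)) (nth e ((j : ℕ) + 1)) :=
        Finset.sum_congr rfl fun j _ =>
          (pairMarg (Q2 Q) r hRrow hhead (varb Q f) m (j : ℕ) j.isLt).symm
    _ = ∑ e : Fin (m + 1) → A, ∑ j : Fin m,
          pathP r (Q2 Q) m e * varb Q f (nth e (j : ℕ)) (nth e ((j : ℕ) + 1)) :=
        Finset.sum_comm
    _ = ∑ e : Fin (m + 1) → A, pE (pathP r Q (2 * m)) (evens m) e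
          * Vp (cp (pathP r Q (2 * m)) (evens m) e) (pathS f (2 * m)) := by
        refine Finset.sum_congr rfl fun e _ => ?_
        rw [hVcp e, hfiber e, Finset.mul_sum]
    _ ≤ Vp (pathP r Q (2 * m)) (pathS f (2 * m)) := totalVar h1 hpEpos

end Main

section Bridge
open MeasureTheory

variable {O : Type*} [MeasurableSpace O] (mu : Measure O) [IsProbabilityMeasure mu]
variable (X : ℕ → O → A) (Q : A → A → ℝ) (pi : A → ℝ)

/-- the cylinder event -/
def cyl (n : ℕ) (w : Fin (n + 1) → A) : Set O :=
  {ω | ∀ i : Fin (n + 1), X (i : ℕ) ω = w i}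

lemma cyl_law
    (hMarkov : ∀ (n : ℕ) (w : Fin (n + 1) → A) (a : A),
      (mu {ω | (∀ i : Fin (n + 1), X (i : ℕ) ω = w i) ∧ X (n + 1) ω = a}).toReal
        = Q (w (Fin.last n)) a * (mu {ω | ∀ i : Fin (n + 1), X (i : ℕ) ω = w i}).toReal)
    (hinit : ∀ a, (mu {ω | X 0 ω = a}).toReal = pi a) :
    ∀ (n : ℕ) (w : Fin (n + 1) → A), (mu (cyl X n w)).toReal = pathP pi Q n w := by
  intro n
  induction n with
  | zero =>
    intro w
    have hset : cyl X 0 w = {ω | X 0 ω = w 0} := by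
      ext ω
      simp only [cyl, Set.mem_setOf_eq]
      constructor
      · intro h
        exact h 0
      · intro h i
        have : i = 0 := Fin.ext (by have := i.isLt; omega)
        rw [this]
        exact h
    rw [hset, hinit (w 0), pathP, kp, range_zero, prod_empty, mul_one,
      nth_eq w (by omega)]
    rfl
  | succ n ih =>
    intro w
    set w' : Fin (n + 1) → A := Fin.init w with hw'
    have hsnoc : Fin.snoc w' (w (Fin.last (n + 1))) = w := Fin.snoc_init_self w
    have hset : {ω | (∀ i : Fin (n + 1), X (i : ℕ) ω = w' i)
        ∧ X (n + 1) ω = w (Fin.last (n + 1))} = cyl X (n + 1) w := by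
      ext ω
      simp only [cyl, Set.mem_setOf_eq]
      constructor
      · rintro ⟨h1, h2⟩ i
        by_cases hv : (i : ℕ) < n + 1
        · have h := h1 ⟨(i : ℕ), hv⟩
          have hc : Fin.castSucc (⟨(i : ℕ), hv⟩ : Fin (n + 1)) = i := by
            exact Fin.ext rfl
          rw [show w' ⟨(i : ℕ), hv⟩ = w i from by rw [hw']; unfold Fin.init; rw [hc]] at h
          exact h
        · have : i = Fin.last (n + 1) := Fin.ext (by have := i.isLt; rw [Fin.val_last]; omega)
          rw [this]
          exact h2
      · intro h
        constructor
        · intro i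
          have := h i.castSucc
          rwa [show ((i.castSucc : Fin (n + 2)) : ℕ) = (i : ℕ) from rfl] at this
        · exact h (Fin.last (n + 1))
    have := hMarkov n w' (w (Fin.last (n + 1)))
    rw [hset] at this
    rw [this, show {ω | ∀ i : Fin (n + 1), X (i : ℕ) ω = w' i} = cyl X n w' from rfl, ih w']
    have : pathP pi Q (n + 1) w = pathP pi Q n w' * Q (nth w' n) (w (Fin.last (n + 1))) := by
      rw [← hsnoc, pathP_snoc]
      rw [hsnoc]
    rw [this, nth_eq w' (by omega)]
    have : (⟨n, by omega⟩ : Fin (n + 1)) = Fin.last n := rfl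
    rw [this, mul_comm]

lemma cyl_nullMeasurable {n : ℕ} (P : (Fin (n + 1) → A) → ℝ)
    (hlaw : ∀ w, (mu (cyl X n w)).toReal = P w)
    (hnn : ∀ w, 0 ≤ P w) (h1 : ∑ w, P w = 1) :
    ∀ w, NullMeasurableSet (cyl X n w) mu := by
  intro w
  have hmeas : ∀ w', mu (cyl X n w') = ENNReal.ofReal (P w') := by
    intro w'
    rw [← hlaw w', ENNReal.ofReal_toReal (measure_ne_top mu _)]
  have hP1 : P w ≤ 1 := by
    rw [← h1]
    exact Finset.single_le_sum (fun i _ => hnn i) (mem_univ w)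
  have hcompl : (cyl X n w)ᶜ ⊆ ⋃ w' ∈ (univ.erase w : Finset (Fin (n + 1) → A)), cyl X n w' := by
    intro ω hω
    have hvmem : ω ∈ cyl X n (fun i : Fin (n + 1) => X (i : ℕ) ω) := fun i => rfl
    have hvne : (fun i : Fin (n + 1) => X (i : ℕ) ω) ≠ w := by
      intro hv
      rw [hv] at hvmem
      exact hω hvmem
    exact Set.mem_biUnion (Finset.mem_coe.2 (Finset.mem_erase.2 ⟨hvne, mem_univ _⟩)) hvmem
  have hup : mu ((cyl X n w)ᶜ) ≤ ENNReal.ofReal (1 - P w) := by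
    refine le_trans (measure_mono hcompl) (le_trans (measure_biUnion_finset_le _ _) ?_)
    have : ∑ w' ∈ univ.erase w, mu (cyl X n w')
        = ENNReal.ofReal (∑ w' ∈ univ.erase w, P w') := by
      rw [ENNReal.ofReal_sum_of_nonneg (fun i _ => hnn i)]
      exact Finset.sum_congr rfl fun w' _ => hmeas w'
    rw [this, Finset.sum_erase_eq_sub (mem_univ w), h1]
  have hsumEq : mu (cyl X n w) + mu ((cyl X n w)ᶜ) = 1 := by
    refine le_antisymm ?_ ?_
    · rw [hmeas w]
      calc ENNReal.ofReal (P w) + mu ((cyl X n w)ᶜ)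
          ≤ ENNReal.ofReal (P w) + ENNReal.ofReal (1 - P w) := add_le_add_right hup _
        _ = ENNReal.ofReal (P w + (1 - P w)) := (ENNReal.ofReal_add (hnn w) (by linarith)).symm
        _ = 1 := by norm_num
    · calc (1 : ℝ≥0∞) = mu Set.univ := (measure_univ).symm
        _ = mu ((cyl X n w) ∪ (cyl X n w)ᶜ) := by rw [Set.union_compl_self]
        _ ≤ mu (cyl X n w) + mu ((cyl X n w)ᶜ) := measure_union_le _ _
  set t := toMeasurable mu (cyl X n w) with ht
  set s := toMeasurable mu ((cyl X n w)ᶜ) with hs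
  have huniv : t ∪ s = Set.univ := by
    apply Set.eq_univ_of_univ_subset
    rw [← Set.union_compl_self (cyl X n w)]
    exact Set.union_subset_union (subset_toMeasurable _ _) (subset_toMeasurable _ _)
  have hinter : mu (t ∩ s) = 0 := by
    have h2 : mu (t ∪ s) + mu (t ∩ s) = mu t + mu s :=
      measure_union_add_inter (μ := mu) t (measurableSet_toMeasurable mu ((cyl X n w)ᶜ))
    rw [huniv, measure_univ, measure_toMeasurable, measure_toMeasurable, hsumEq] at h2
    have h3 : (1 : ℝ≥0∞) + mu (t ∩ s) = 1 + 0 := by rw [add_zero]; exact h2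
    exact (ENNReal.add_right_inj (by norm_num)).1 h3
  have hdiff : mu (t \ cyl X n w) = 0 := by
    refine measure_mono_null ?_ hinter
    intro x hx
    exact ⟨hx.1, subset_toMeasurable _ _ hx.2⟩
  refine ⟨t, measurableSet_toMeasurable _ _, ?_⟩
  rw [MeasureTheory.ae_eq_set]
  constructor
  · rw [Set.diff_eq_empty.2 (subset_toMeasurable _ _)]
    exact measure_empty
  · exact hdiff

lemma cyl_integral {n : ℕ} (P : (Fin (n + 1) → A) → ℝ)
    (hlaw : ∀ w, (mu (cyl X n w)).toReal = P w)
    (hnn : ∀ w, 0 ≤ P w) (h1 : ∑ w, P w = 1) (φ : (Fin (n + 1) → A) → ℝ) :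
    MemLp (fun ω => φ (fun i => X (i : ℕ) ω)) 2 mu ∧
      ∫ ω, φ (fun i => X (i : ℕ) ω) ∂mu = ∑ w, P w * φ w := by
  have hnm := cyl_nullMeasurable mu X P hlaw hnn h1
  set t : (Fin (n + 1) → A) → Set O := fun w => toMeasurable mu (cyl X n w) with htdef
  have haew : ∀ w, cyl X n w =ᵐ[mu] t w := fun w => ((hnm w).toMeasurable_ae_eq).symm
  have hrep : (fun ω => φ (fun i => X (i : ℕ) ω))
      = fun ω => ∑ w, (cyl X n w).indicator (fun _ => φ w) ω := by
    funext ω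
    rw [Finset.sum_eq_single (fun i : Fin (n + 1) => X (i : ℕ) ω)]
    · rw [Set.indicator_of_mem (show ω ∈ cyl X n _ from fun i => rfl)]
    · intro w _ hne
      rw [Set.indicator_of_notMem]
      intro hmem
      exact hne (funext fun i => (hmem i).symm)
    · intro h
      exact absurd (mem_univ _) h
  have hall : ∀ᵐ ω ∂mu, ∀ w : Fin (n + 1) → A,
      (cyl X n w).indicator (fun _ => φ w) ω = (t w).indicator (fun _ => φ w) ω := by
    rw [MeasureTheory.ae_all_iff]
    exact fun w => indicator_ae_eq_of_ae_eq_set (haew w)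
  have haefun : (fun ω => φ (fun i => X (i : ℕ) ω))
      =ᵐ[mu] fun ω => ∑ w, (t w).indicator (fun _ => φ w) ω := by
    rw [hrep]
    filter_upwards [hall] with ω hω
    exact Finset.sum_congr rfl fun w _ => hω w
  have hmemG : MemLp (fun ω => ∑ w, (t w).indicator (fun _ => φ w) ω) 2 mu := by
    have := memLp_finset_sum' (μ := mu) (p := 2) univ
      (f := fun (w : Fin (n + 1) → A) (ω : O) => (t w).indicator (fun _ => φ w) ω) ?_
    · convert this using 1
      funext ω
      simp
    intro w _
    exact memLp_indicator_const 2 (measurableSet_toMeasurable _ _) _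
      (Or.inr (measure_ne_top _ _))
  constructor
  · exact hmemG.ae_eq haefun.symm
  · rw [integral_congr_ae haefun,
      integral_finset_sum _ (fun w _ => (memLp_indicator_const 2
        (measurableSet_toMeasurable _ _) (φ w)
        (Or.inr (measure_ne_top _ _))).integrable one_le_two)]
    refine Finset.sum_congr rfl fun w _ => ?_
    rw [integral_indicator_const (φ w) (measurableSet_toMeasurable _ _)]
    rw [show mu.real (toMeasurable mu (cyl X n w)) = (mu (cyl X n w)).toReal from by
        rw [measureReal_def, measure_toMeasurable], smul_eq_mul,
      hlaw w]

lemma cyl_variance {n : ℕ} (P : (Fin (n + 1) → A) → ℝ)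
    (hlaw : ∀ w, (mu (cyl X n w)).toReal = P w)
    (hnn : ∀ w, 0 ≤ P w) (h1 : ∑ w, P w = 1) (S : (Fin (n + 1) → A) → ℝ) :
    ProbabilityTheory.variance (fun ω => S (fun i => X (i : ℕ) ω)) mu = Vp P S := by
  obtain ⟨hmem, hint⟩ := cyl_integral mu X P hlaw hnn h1 S
  obtain ⟨_, hint2⟩ := cyl_integral mu X P hlaw hnn h1 (fun w => (S w) ^ 2)
  rw [ProbabilityTheory.variance_eq_sub hmem]
  have hpow : (fun ω => S (fun i => X (i : ℕ) ω)) ^ 2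
      = fun ω => (fun w => (S w) ^ 2) (fun i => X (i : ℕ) ω) := by
    funext ω
    simp [pow_two]
  rw [hpow, hint2, hint]
  rfl

end Bridge

end KS

theorem stmt2' {Ω Ω' A : Type*} [MeasurableSpace Ω] [MeasurableSpace Ω']
    [MeasurableSpace A] [Fintype A] [DecidableEq A]
    (μ : Measure Ω) (μ' : Measure Ω') [IsProbabilityMeasure μ] [IsProbabilityMeasure μ']
    (X : ℕ → Ω → A) (Xbar : ℕ → Ω' → A) (Q : A → A → ℝ) (pi : A → ℝ)
    (hXmeas : ∀ i, Measurable (X i)) (hXbarmeas : ∀ i, Measurable (Xbar i))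
    (hQpos : ∀ a a', 0 < Q a a') (hQrow : ∀ a, ∑ a', Q a a' = 1)
    (hdouble : ∀ a', ∑ a, Q a a' = 1)
    (hunif : ∀ a, pi a = 1 / Fintype.card A)
    (hMarkov' : ∀ (n : ℕ) (w : Fin (n + 1) → A) (a : A),
      (μ' {ω | (∀ i : Fin (n + 1), Xbar (i : ℕ) ω = w i) ∧ Xbar (n + 1) ω = a}).toReal
        = Q (w (Fin.last n)) a * (μ' {ω | ∀ i : Fin (n + 1), Xbar (i : ℕ) ω = w i}).toReal)
    (hinit' : ∀ a, (μ' {ω | Xbar 0 ω = a}).toReal = pi a)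
    (σ2 : ℝ)
    (hσ2 : Tendsto (fun n : ℕ =>
        variance (fun ω => ∑ i ∈ Finset.range n,
          Real.log (Q (Xbar i ω) (Xbar (i + 1) ω) / pi (Xbar (i + 1) ω))) μ' / n)
      atTop (𝓝 σ2)) :
    σ2 = 0 ↔ ∀ (n : ℕ) (w : Fin n → A),
      (μ' {ω | ∀ i : Fin n, Xbar (i : ℕ) ω = w i}).toReal
        = (1 / (Fintype.card A : ℝ)) ^ n := by
  classical
  have hA : Nonempty A := by
    by_contra h
    rw [not_nonempty_iff] at h
    have huniv : (Set.univ : Set Ω') = ∅ :=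
      Set.eq_empty_iff_forall_notMem.2 fun ω _ => (h.false (Xbar 0 ω))
    have h0 : μ' Set.univ = 0 := by rw [huniv, measure_empty]
    rw [measure_univ] at h0
    exact one_ne_zero h0
  have hcard : 0 < Fintype.card A := Fintype.card_pos
  set N : ℝ := (Fintype.card A : ℝ) with hNdef
  have hNpos : (0 : ℝ) < N := by
    rw [hNdef]; exact_mod_cast hcard
  have hpi : ∀ a, pi a = 1 / N := hunif
  have hpipos : ∀ a, 0 < pi a := fun a => by rw [hpi a]; positivity
  have hpisum : ∑ a, pi a = 1 := by
    rw [Finset.sum_congr rfl fun a _ => hpi a, Finset.sum_const, card_univ, nsmul_eq_mul]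
    field_simp
    exact hNdef.symm
  set f : A → A → ℝ := fun a b => Real.log (Q a b / pi b) with hf
  have hlaw : ∀ n (w : Fin (n + 1) → A),
      (μ' (KS.cyl Xbar n w)).toReal = KS.pathP pi Q n w :=
    KS.cyl_law μ' Xbar Q pi hMarkov' hinit'
  have hnn : ∀ n (w : Fin (n + 1) → A), 0 ≤ KS.pathP pi Q n w :=
    fun n w => (KS.pathP_pos hpipos hQpos n w).le
  have h1 : ∀ n, ∑ w : Fin (n + 1) → A, KS.pathP pi Q n w = 1 := fun n => by
    rw [KS.sum_pathP pi Q hQrow n, hpisum]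
  have hvar : ∀ n : ℕ, variance (fun ω => ∑ i ∈ Finset.range n,
      Real.log (Q (Xbar i ω) (Xbar (i + 1) ω) / pi (Xbar (i + 1) ω))) μ'
        = KS.Vp (KS.pathP pi Q n) (KS.pathS f n) := by
    intro n
    have hfun : (fun ω => ∑ i ∈ Finset.range n,
        Real.log (Q (Xbar i ω) (Xbar (i + 1) ω) / pi (Xbar (i + 1) ω)))
        = fun ω => KS.pathS f n (fun i : Fin (n + 1) => Xbar (i : ℕ) ω) := by
      funext ω
      rw [KS.pathS]
      refine (Finset.sum_congr rfl fun i hi => ?_)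
      rw [Finset.mem_range] at hi
      rw [KS.nth_eq _ (by omega : i < n + 1), KS.nth_eq _ (by omega : i + 1 < n + 1)]
    rw [hfun]
    exact KS.cyl_variance μ' Xbar (KS.pathP pi Q n) (hlaw n) (hnn n) (h1 n) (KS.pathS f n)
  have hQ2pos : ∀ a c, 0 < KS.Q2 Q a c := fun a c =>
    Finset.sum_pos (fun b _ => mul_pos (hQpos a b) (hQpos b c)) univ_nonempty
  have hQ2row : ∀ a, ∑ c, KS.Q2 Q a c = 1 := by
    intro a
    rw [show (∑ c, KS.Q2 Q a c) = ∑ b, ∑ c, Q a b * Q b c from Finset.sum_comm]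
    calc ∑ b, ∑ c, Q a b * Q b c = ∑ b, Q a b * ∑ c, Q b c :=
          Finset.sum_congr rfl fun b _ => (Finset.mul_sum _ _ _).symm
      _ = 1 := by simp only [hQrow, mul_one]
  have hksum : ∀ a c, ∑ b, Q a b * Q b c / KS.Q2 Q a c = 1 := by
    intro a c
    rw [← Finset.sum_div]
    exact div_self (hQ2pos a c).ne'
  constructor
  · -- forward
    intro hzero
    have hQ2col : ∀ b, ∑ a, KS.Q2 Q a b = 1 := by
      intro b
      rw [show (∑ a, KS.Q2 Q a b) = ∑ x, ∑ a, Q a x * Q x b from Finset.sum_comm]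
      calc ∑ x, ∑ a, Q a x * Q x b = ∑ x, (∑ a, Q a x) * Q x b :=
            Finset.sum_congr rfl fun x _ => (Finset.sum_mul _ _ _).symm
        _ = 1 := by simp only [hdouble, one_mul]
    have hhead : ∀ b, ∑ a, pi a * KS.Q2 Q a b = pi b := by
      intro b
      calc ∑ a, pi a * KS.Q2 Q a b = ∑ a, (1 / N) * KS.Q2 Q a b :=
            Finset.sum_congr rfl fun a _ => by rw [hpi a]
        _ = (1 / N) * ∑ a, KS.Q2 Q a b := (Finset.mul_sum _ _ _).symm
        _ = pi b := by rw [hQ2col b, mul_one]; rw [hpi b]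
    have hLB := KS.mainLB Q f pi hQpos hQrow hpipos hpisum hhead
    set V := ∑ a, ∑ c, pi a * KS.Q2 Q a c * KS.varb Q f a c with hVdef
    have h2m : Tendsto (fun m : ℕ => variance (fun ω => ∑ i ∈ Finset.range (2 * m),
        Real.log (Q (Xbar i ω) (Xbar (i + 1) ω) / pi (Xbar (i + 1) ω))) μ' / (2 * m : ℕ))
        atTop (𝓝 σ2) :=
      hσ2.comp (by
        apply Filter.tendsto_atTop_atTop_of_monotone (fun x y h => by omega)
        intro b
        exact ⟨b, by omega⟩)
    have hVle : V / 2 ≤ σ2 := by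
      refine ge_of_tendsto h2m ?_
      filter_upwards [Filter.eventually_ge_atTop 1] with m hm
      rw [hvar (2 * m)]
      have hm' : (0 : ℝ) < ((2 * m : ℕ) : ℝ) := by
        have : (1 : ℕ) ≤ 2 * m := by omega
        exact_mod_cast Nat.lt_of_lt_of_le Nat.zero_lt_one this
      rw [le_div_iff₀ hm']
      calc V / 2 * ((2 * m : ℕ) : ℝ) = (m : ℝ) * V := by push_cast; ring
        _ ≤ KS.Vp (KS.pathP pi Q (2 * m)) (KS.pathS f (2 * m)) := hLB m
    have hterm : ∀ a, ∀ c, 0 ≤ pi a * KS.Q2 Q a c * KS.varb Q f a c := by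
      intro a c
      refine mul_nonneg (mul_nonneg (hpipos a).le (hQ2pos a c).le) ?_
      exact KS.Vp_nonneg
        (fun b => div_nonneg (mul_nonneg (hQpos a b).le (hQpos b c).le) (hQ2pos a c).le)
        (hksum a c)
    have hV0 : V = 0 := le_antisymm (by rw [hzero] at hVle; linarith)
      (Finset.sum_nonneg fun a _ => Finset.sum_nonneg fun c _ => hterm a c)
    have hvarb0 : ∀ a c, KS.varb Q f a c = 0 := by
      intro a c
      have houter := (Finset.sum_eq_zero_iff_of_nonneg
        (fun a _ => Finset.sum_nonneg fun c _ => hterm a c)).1 hV0 a (mem_univ a)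
      have hinner := (Finset.sum_eq_zero_iff_of_nonneg (fun c _ => hterm a c)).1
        houter c (mem_univ c)
      have hcpos : 0 < pi a * KS.Q2 Q a c := mul_pos (hpipos a) (hQ2pos a c)
      rcases mul_eq_zero.1 hinner with h | h
      · exact absurd h hcpos.ne'
      · exact h
    have hkey : ∀ a b b' c, f a b + f b c = f a b' + f b' c := by
      intro a b b' c
      exact KS.Vp_eq_zero
        (fun x => div_pos (mul_pos (hQpos a x) (hQpos x c)) (hQ2pos a c))
        (hksum a c) (hvarb0 a c) b b'
    have hprod : ∀ a b b' c, Q a b * Q b c = Q a b' * Q b' c := by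
      intro a b b' c
      have h := hkey a b b' c
      have hd : ∀ x y : A, 0 < Q x y / pi y := fun x y => div_pos (hQpos x y) (hpipos y)
      have hx : Real.log ((Q a b / pi b) * (Q b c / pi c))
          = Real.log ((Q a b' / pi b') * (Q b' c / pi c)) := by
        rw [Real.log_mul (hd a b).ne' (hd b c).ne', Real.log_mul (hd a b').ne' (hd b' c).ne']
        exact h
      have hy := congrArg Real.exp hx
      rw [Real.exp_log (mul_pos (hd a b) (hd b c)),
        Real.exp_log (mul_pos (hd a b') (hd b' c))] at hy
      rw [hpi b, hpi b', hpi c] at hy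
      have hN' : N ≠ 0 := hNpos.ne'
      have hsimp : ∀ x y : A, Q x y / (1 / N) = Q x y * N := fun x y => by field_simp
      rw [hsimp, hsimp, hsimp, hsimp] at hy
      have h2 : (Q a b * Q b c) * N ^ 2 = (Q a b' * Q b' c) * N ^ 2 := by
        calc (Q a b * Q b c) * N ^ 2 = Q a b * N * (Q b c * N) := by ring
          _ = Q a b' * N * (Q b' c * N) := hy
          _ = (Q a b' * Q b' c) * N ^ 2 := by ring
      exact mul_right_cancel₀ (pow_ne_zero 2 hN') h2
    have hQunif : ∀ a b, Q a b = 1 / N := by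
      intro a b
      have h1c : ∀ c, N * (Q a b * Q b c) = KS.Q2 Q a c := by
        intro c
        rw [show KS.Q2 Q a c = ∑ b' : A, Q a b' * Q b' c from rfl,
          show (∑ b' : A, Q a b' * Q b' c) = ∑ _b' : A, Q a b * Q b c from
            Finset.sum_congr rfl fun b' _ => (hprod a b b' c).symm,
          Finset.sum_const, card_univ, nsmul_eq_mul]
      have h2 : N * Q a b = 1 := by
        have hs : ∑ c, N * (Q a b * Q b c) = ∑ c, KS.Q2 Q a c :=
          Finset.sum_congr rfl fun c _ => h1c c
        rw [hQ2row a] at hs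
        calc N * Q a b = N * Q a b * ∑ c, Q b c := by rw [hQrow b, mul_one]
          _ = ∑ c, N * (Q a b * Q b c) := by
              rw [Finset.mul_sum]
              exact Finset.sum_congr rfl fun c _ => by ring
          _ = 1 := hs
      rw [eq_div_iff hNpos.ne', mul_comm]
      exact h2
    intro n w
    match n, w with
    | 0, w =>
      have : {ω : Ω' | ∀ i : Fin 0, Xbar (i : ℕ) ω = w i} = Set.univ :=
        Set.eq_univ_iff_forall.2 fun ω i => i.elim0
      rw [this, measure_univ, pow_zero, ENNReal.toReal_one]
    | (n + 1), w =>
      rw [show {ω : Ω' | ∀ i : Fin (n + 1), Xbar (i : ℕ) ω = w i} = KS.cyl Xbar n w from rfl,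
        hlaw n w, KS.pathP, KS.kp, hpi,
        Finset.prod_congr rfl fun i (_ : i ∈ range n) => hQunif (KS.nth w i) (KS.nth w (i + 1)),
        Finset.prod_const, card_range, pow_succ]
      ring
  · -- reverse
    intro hiid
    have hQunif : ∀ a a', Q a a' = 1 / N := by
      intro a a'
      set w2 : Fin 2 → A := fun i => if (i : ℕ) = 0 then a else a' with hw2
      have hM := hMarkov' 0 (fun _ : Fin 1 => a) a'
      have hset2 : {ω | (∀ i : Fin 1, Xbar (i : ℕ) ω = (fun _ : Fin 1 => a) i)
          ∧ Xbar 1 ω = a'} = {ω | ∀ i : Fin 2, Xbar (i : ℕ) ω = w2 i} := by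
        ext ω
        simp only [Set.mem_setOf_eq]
        constructor
        · rintro ⟨hl, hr⟩ i
          by_cases hi : (i : ℕ) = 0
          · have hi0 : i = 0 := Fin.ext hi
            subst hi0
            simpa [hw2] using hl 0
          · have h1v : (i : ℕ) = 1 := by have := i.isLt; omega
            have hi1 : i = 1 := Fin.ext h1v
            subst hi1
            simpa [hw2] using hr
        · intro hh
          constructor
          · intro i
            have h0 : (i : ℕ) = 0 := by have := i.isLt; omega
            have h00 := hh ⟨0, by omega⟩
            simp only [hw2] at h00
            rw [h0]
            simpa using h00
          · have h11 := hh ⟨1, by omega⟩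
            simp only [hw2] at h11
            simpa using h11
      have hset1 : {ω | ∀ i : Fin 1, Xbar (i : ℕ) ω = (fun _ : Fin 1 => a) i}
          = {ω | ∀ i : Fin 1, Xbar (i : ℕ) ω = (fun _ : Fin 1 => a) i} := rfl
      rw [hset2] at hM
      rw [hiid 2 w2] at hM
      rw [hiid 1 (fun _ : Fin 1 => a)] at hM
      have hMv : (1 / N) ^ 2 = Q a a' * (1 / N) ^ 1 := hM
      have h1N : (0 : ℝ) < 1 / N := by positivity
      rw [pow_one, pow_two] at hMv
      exact (mul_right_cancel₀ h1N.ne' hMv).symm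
    have hvar0 : ∀ n : ℕ, variance (fun ω => ∑ i ∈ Finset.range n,
        Real.log (Q (Xbar i ω) (Xbar (i + 1) ω) / pi (Xbar (i + 1) ω))) μ' = 0 := by
      intro n
      have hzf : (fun ω : Ω' => ∑ i ∈ Finset.range n,
          Real.log (Q (Xbar i ω) (Xbar (i + 1) ω) / pi (Xbar (i + 1) ω)))
          = fun _ => (0 : ℝ) := by
        funext ω
        refine Finset.sum_eq_zero fun i _ => ?_
        rw [hQunif, hpi, div_self (by positivity : (1 : ℝ) / N ≠ 0), Real.log_one]
      rw [hzf]
      exact variance_zero μ'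
    have hz : (fun n : ℕ => variance (fun ω => ∑ i ∈ Finset.range n,
        Real.log (Q (Xbar i ω) (Xbar (i + 1) ω) / pi (Xbar (i + 1) ω))) μ' / n)
        = fun _ : ℕ => (0 : ℝ) := by
      funext n
      rw [hvar0 n, zero_div]
    rw [hz] at hσ2
    exact tendsto_nhds_unique hσ2 tendsto_const_nhds

/-- **Proposition 2** (Kontoyiannis–Skoularidou): for a chain with all-positive,
doubly stochastic transition matrix (so that the stationary distribution is
uniform), the asymptotic variance `σ²` is zero if and only if the variables of
the stationary chain are i.i.d., each uniformly distributed on `A`. -/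
theorem stmt2 {Ω Ω' A : Type*} [MeasurableSpace Ω] [MeasurableSpace Ω']
    [MeasurableSpace A] [Fintype A] [DecidableEq A]
    (μ : Measure Ω) (μ' : Measure Ω') [IsProbabilityMeasure μ] [IsProbabilityMeasure μ']
    (X : ℕ → Ω → A) (Xbar : ℕ → Ω' → A) (Q : A → A → ℝ) (pi : A → ℝ)
    (hXmeas : ∀ i, Measurable (X i)) (hXbarmeas : ∀ i, Measurable (Xbar i))
    (hQpos : ∀ a a', 0 < Q a a') (hQrow : ∀ a, ∑ a', Q a a' = 1)
    (hdouble : ∀ a', ∑ a, Q a a' = 1)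
    (hMarkov : IsMarkov μ X Q)
    (hunif : ∀ a, pi a = 1 / Fintype.card A)
    (hMarkov' : IsMarkov μ' Xbar Q)
    (hinit' : ∀ a, (μ' {ω | Xbar 0 ω = a}).toReal = pi a)
    (σ2 : ℝ)
    (hσ2 : Tendsto (fun n : ℕ =>
        variance (fun ω => ∑ i ∈ Finset.range n,
          Real.log (Q (Xbar i ω) (Xbar (i + 1) ω) / pi (Xbar (i + 1) ω))) μ' / n)
      atTop (𝓝 σ2)) :
    σ2 = 0 ↔ ∀ (n : ℕ) (w : Fin n → A),
      (μ' {ω | ∀ i : Fin n, Xbar (i : ℕ) ω = w i}).toReal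
        = (1 / (Fintype.card A : ℝ)) ^ n :=
  stmt2' μ μ' X Xbar Q pi hXmeas hXbarmeas hQpos hQrow hdouble hunif hMarkov' hinit' σ2 hσ2

end
end

section
/- Let {X_n} be a Markov chain on the finite alphabet A = {1,…,m} with all-positive transition matrix and arbitrary initial distribution. Let Θ ⊂ ℝ^{m(m−1)} parametrize all all-positive m×m transition matrices Q_θ, let Φ ⊂ ℝ^{m−1} parametrize all all-positive probability vectors, embedded in Θ via h(φ) yielding the transition matrix with all rows equal to φ, and let L_n(X_0^n; θ) = log ∏_{i=1}^n Q_θ(X_i|X_{i−1}) be the conditional log-likelihood. Then the likelihood-ratio statistic Δ_n = 2[ max_{θ∈Θ} L_n(X_0^n; θ) − max_{φ∈Φ} L_n(X_0^n; h(φ)) ] satisfies Δ_n = 2n Î_n, where Î_n is the plug-in estimator of mutual information computed from the bivariate empirical distribution of the sample X_0^n. -/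
open MeasureTheory ProbabilityTheory Filter Finset Topology
open scoped NNReal

noncomputable section

set_option linter.unusedSectionVars false


section
variable {T : Type*} [Fintype T] [DecidableEq T]

lemma gibbs_term (c q N : ℝ) (hc : 0 ≤ c) (hq : 0 < q) (hcN : c ≤ N) :
    c * Real.log q ≤ c * Real.log (c / N) + (q * N - c) := by
  rcases eq_or_lt_of_le hc with h | h
  · subst h
    simp
    positivity
  · have hN : 0 < N := lt_of_lt_of_le h hcN
    have hx : 0 < q * N / c := by positivity
    have h1 := Real.log_le_sub_one_of_pos hx
    have h2 : Real.log (q * N / c) = Real.log q - Real.log (c / N) := by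
      rw [Real.log_div (by positivity) (ne_of_gt h), Real.log_mul (ne_of_gt hq) (ne_of_gt hN),
        Real.log_div (ne_of_gt h) (ne_of_gt hN)]
      ring
    rw [h2] at h1
    have := mul_le_mul_of_nonneg_left h1 hc
    have hqNc : c * (q * N / c - 1) = q * N - c := by field_simp
    nlinarith

lemma gibbs_sum (c q : T → ℝ) (hc : ∀ t, 0 ≤ c t)
    (hq : ∀ t, 0 < q t) (hqs : ∑ t, q t ≤ 1) :
    ∑ t, c t * Real.log (q t) ≤ ∑ t, c t * Real.log (c t / (∑ s, c s)) := by
  set N := ∑ s, c s with hN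
  have hN0 : 0 ≤ N := Finset.sum_nonneg fun t _ => hc t
  have key : ∀ t, c t * Real.log (q t) ≤ c t * Real.log (c t / N) + (q t * N - c t) := by
    intro t
    exact gibbs_term _ _ _ (hc t) (hq t)
      (Finset.single_le_sum (fun s _ => hc s) (Finset.mem_univ t))
  calc ∑ t, c t * Real.log (q t) ≤ ∑ t, (c t * Real.log (c t / N) + (q t * N - c t)) :=
        Finset.sum_le_sum fun t _ => key t
    _ = ∑ t, c t * Real.log (c t / N) + ((∑ t, q t) * N - N) := by
        rw [Finset.sum_add_distrib, Finset.sum_sub_distrib, ← Finset.sum_mul, hN]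
    _ ≤ ∑ t, c t * Real.log (c t / N) := by nlinarith

lemma sum_comp_count (n : ℕ) (y : ℕ → T) (f : T → ℝ) :
    ∑ i ∈ range n, f (y i) = ∑ t, (∑ i ∈ range n, if y i = t then (1:ℝ) else 0) * f t := by
  simp_rw [Finset.sum_mul, ite_mul, one_mul, zero_mul]
  rw [Finset.sum_comm]
  congr 1
  ext i
  simp

lemma tendsto_loglik_term (c N m : ℝ) (hc : 0 ≤ c) (hcN : c ≤ N) :
    Tendsto (fun ε => c * Real.log ((c + ε)/(N + m*ε))) (𝓝[>] (0:ℝ))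
      (𝓝 (c * Real.log (c / N))) := by
  rcases eq_or_lt_of_le hc with h | h
  · subst h
    simp only [zero_mul]
    exact tendsto_const_nhds
  · have hN : 0 < N := lt_of_lt_of_le h hcN
    have : ContinuousAt (fun ε => c * Real.log ((c + ε)/(N + m*ε))) 0 := by
      have h1 : ContinuousAt (fun ε : ℝ => (c + ε)/(N + m*ε)) 0 := by
        apply ContinuousAt.div (by fun_prop) (by fun_prop)
        simp [ne_of_gt hN]
      apply continuousAt_const.mul (h1.log ?_)
      simp only [mul_zero, add_zero]
      positivity
    have ht := this.tendsto
    simp only [add_zero, mul_zero] at ht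
    exact ht.mono_left nhdsWithin_le_nhds

lemma sSup_vec [Nonempty T] (n : ℕ) (y : ℕ → T) :
    sSup {L : ℝ | ∃ φ : T → ℝ, (∀ t, 0 < φ t) ∧ (∑ t, φ t = 1) ∧
        L = ∑ i ∈ Finset.range n, Real.log (φ (y i))}
    = ∑ t, (∑ i ∈ Finset.range n, if y i = t then (1:ℝ) else 0)
        * Real.log ((∑ i ∈ Finset.range n, if y i = t then (1:ℝ) else 0)
          / (∑ s, ∑ i ∈ Finset.range n, if y i = s then (1:ℝ) else 0)) := by
  classical
  set c : T → ℝ := fun t => ∑ i ∈ Finset.range n, if y i = t then (1:ℝ) else 0 with hcdef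
  have hc : ∀ t, 0 ≤ c t := fun t => Finset.sum_nonneg fun i _ => by positivity
  set N := ∑ s, c s with hNdef
  have hN0 : 0 ≤ N := Finset.sum_nonneg fun t _ => hc t
  have hm : (0:ℝ) < Fintype.card T := by exact_mod_cast Fintype.card_pos
  have hconv : ∀ φ : T → ℝ, ∑ i ∈ Finset.range n, Real.log (φ (y i))
      = ∑ t, c t * Real.log (φ t) := fun φ => sum_comp_count n y (fun t => Real.log (φ t))
  have hne : {L : ℝ | ∃ φ : T → ℝ, (∀ t, 0 < φ t) ∧ (∑ t, φ t = 1) ∧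
      L = ∑ i ∈ Finset.range n, Real.log (φ (y i))}.Nonempty := by
    refine ⟨_, fun _ => (Fintype.card T : ℝ)⁻¹, fun t => by positivity, ?_, rfl⟩
    rw [Finset.sum_const, Finset.card_univ, nsmul_eq_mul]
    field_simp
  apply IsLUB.csSup_eq _ hne
  constructor
  · rintro L ⟨φ, hφpos, hφsum, rfl⟩
    rw [hconv]
    exact gibbs_sum c φ hc hφpos (le_of_eq hφsum)
  · intro b hb
    have hten : Tendsto (fun ε => ∑ t, c t * Real.log ((c t + ε)/(N + (Fintype.card T) * ε)))
        (𝓝[>] (0:ℝ)) (𝓝 (∑ t, c t * Real.log (c t / N))) := by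
      apply tendsto_finset_sum
      intro t _
      exact tendsto_loglik_term (c t) N _ (hc t)
        (Finset.single_le_sum (fun s _ => hc s) (Finset.mem_univ t))
    refine le_of_tendsto hten ?_
    filter_upwards [self_mem_nhdsWithin] with ε hε
    have hε' : (0:ℝ) < ε := hε
    apply hb
    refine ⟨fun t => (c t + ε)/(N + (Fintype.card T) * ε), ?_, ?_, ?_⟩
    · intro t
      have := hc t
      positivity
    · rw [← Finset.sum_div, Finset.sum_add_distrib, Finset.sum_const, Finset.card_univ,
        nsmul_eq_mul, ← hNdef]
      field_simp
    · exact (hconv _).symm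

lemma sSup_mat [Nonempty T] (n : ℕ) (u v : ℕ → T) :
    sSup {L : ℝ | ∃ Q' : T → T → ℝ, (∀ a a', 0 < Q' a a') ∧ (∀ a, ∑ a', Q' a a' = 1) ∧
        L = ∑ i ∈ Finset.range n, Real.log (Q' (u i) (v i))}
    = ∑ p : T × T, (∑ i ∈ Finset.range n, if u i = p.1 ∧ v i = p.2 then (1:ℝ) else 0)
        * Real.log ((∑ i ∈ Finset.range n, if u i = p.1 ∧ v i = p.2 then (1:ℝ) else 0)
          / (∑ b, ∑ i ∈ Finset.range n, if u i = p.1 ∧ v i = b then (1:ℝ) else 0)) := by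
  classical
  set c : T × T → ℝ :=
    fun p => ∑ i ∈ Finset.range n, if u i = p.1 ∧ v i = p.2 then (1:ℝ) else 0 with hcdef
  have hc : ∀ p, 0 ≤ c p := fun p => Finset.sum_nonneg fun i _ => by positivity
  set N : T → ℝ := fun a => ∑ b, c (a, b) with hNdef
  have hN0 : ∀ a, 0 ≤ N a := fun a => Finset.sum_nonneg fun b _ => hc _
  have hcN : ∀ p : T × T, c p ≤ N p.1 := fun p => by
    simpa using Finset.single_le_sum (f := fun b => c (p.1, b))
      (fun b _ => hc _) (Finset.mem_univ p.2)
  have hm : (0:ℝ) < Fintype.card T := by exact_mod_cast Fintype.card_pos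
  have hcount : ∀ p : T × T,
      (∑ i ∈ Finset.range n, if (u i, v i) = p then (1:ℝ) else 0) = c p := by
    intro p
    simp [hcdef, Prod.ext_iff]
  have hconv : ∀ Q' : T → T → ℝ, ∑ i ∈ Finset.range n, Real.log (Q' (u i) (v i))
      = ∑ p : T × T, c p * Real.log (Q' p.1 p.2) := by
    intro Q'
    have := sum_comp_count n (fun i => (u i, v i)) (fun p => Real.log (Q' p.1 p.2))
    simp only [hcount] at this
    exact this
  have hne : {L : ℝ | ∃ Q' : T → T → ℝ, (∀ a a', 0 < Q' a a') ∧ (∀ a, ∑ a', Q' a a' = 1) ∧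
      L = ∑ i ∈ Finset.range n, Real.log (Q' (u i) (v i))}.Nonempty := by
    refine ⟨_, fun _ _ => (Fintype.card T : ℝ)⁻¹, fun a a' => by positivity, fun a => ?_, rfl⟩
    rw [Finset.sum_const, Finset.card_univ, nsmul_eq_mul]
    field_simp
  apply IsLUB.csSup_eq _ hne
  constructor
  · rintro L ⟨Q', hpos, hrow, rfl⟩
    rw [hconv, Fintype.sum_prod_type, Fintype.sum_prod_type]
    apply Finset.sum_le_sum
    intro a _
    exact gibbs_sum (fun b => c (a, b)) (Q' a) (fun b => hc _) (hpos a) (le_of_eq (hrow a))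
  · intro b hb
    have hten : Tendsto
        (fun ε => ∑ p : T × T, c p * Real.log ((c p + ε)/(N p.1 + (Fintype.card T) * ε)))
        (𝓝[>] (0:ℝ)) (𝓝 (∑ p : T × T, c p * Real.log (c p / N p.1))) := by
      apply tendsto_finset_sum
      intro p _
      exact tendsto_loglik_term (c p) (N p.1) _ (hc p) (hcN p)
    refine le_of_tendsto hten ?_
    filter_upwards [self_mem_nhdsWithin] with ε hε
    have hε' : (0:ℝ) < ε := hε
    apply hb
    refine ⟨fun a a' => (c (a, a') + ε)/(N a + (Fintype.card T) * ε), ?_, ?_, ?_⟩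
    · intro a a'
      have := hc (a, a')
      have := hN0 a
      positivity
    · intro a
      rw [← Finset.sum_div, Finset.sum_add_distrib, Finset.sum_const, Finset.card_univ,
        nsmul_eq_mul]
      have : ∑ a', c (a, a') = N a := rfl
      rw [this]
      have h1 : N a + (Fintype.card T : ℝ) * ε ≠ 0 := by
        have := hN0 a
        positivity
      field_simp
    · have heq : ∑ p : T × T, c p * Real.log ((c p + ε) / (N p.1 + (Fintype.card T) * ε))
          = ∑ p : T × T, c p * Real.log
            ((fun a a' => (c (a, a') + ε) / (N a + (Fintype.card T) * ε)) p.1 p.2) :=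
        Finset.sum_congr rfl fun p _ => rfl
      rw [heq]
      exact (hconv (fun a a' => (c (a, a') + ε) / (N a + (Fintype.card T) * ε))).symm

end

def cC {A : Type*} [DecidableEq A] (x : ℕ → A) (n : ℕ) (p : A × A) : ℝ :=
  ∑ i ∈ Finset.range n, if x i = p.1 ∧ x (i + 1) = p.2 then (1:ℝ) else 0
def dC {A : Type*} [DecidableEq A] (x : ℕ → A) (n : ℕ) (t : A) : ℝ :=
  ∑ i ∈ Finset.range n, if x (i + 1) = t then (1:ℝ) else 0

lemma mul_sum_negMulLog {T : Type*} [Fintype T] (n : ℝ) (hn : n ≠ 0) (e : T → ℝ) :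
    n * ∑ t, Real.negMulLog (e t / n) = -∑ t, e t * Real.log (e t / n) := by
  rw [Finset.mul_sum, ← Finset.sum_neg_distrib]
  apply Finset.sum_congr rfl
  intro t _
  unfold Real.negMulLog
  field_simp

lemma key_identity {A : Type*} [Fintype A] [DecidableEq A] (x : ℕ → A) (n : ℕ) (hn : 0 < n) :
    2 * ((∑ p : A × A, cC x n p * Real.log (cC x n p / ∑ b, cC x n (p.1, b)))
       - (∑ t, dC x n t * Real.log (dC x n t / ∑ s, dC x n s)))
    = 2 * n * pluginMI x n := by
  classical
  have hn' : (n:ℝ) ≠ 0 := Nat.cast_ne_zero.mpr hn.ne'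
  have hcpos : ∀ p, 0 ≤ cC x n p := fun p => Finset.sum_nonneg fun i _ => by positivity
  have hcN : ∀ p : A × A, cC x n p ≤ ∑ b, cC x n (p.1, b) := fun p => by
    simpa using Finset.single_le_sum (f := fun b => cC x n (p.1, b))
      (fun b _ => hcpos _) (Finset.mem_univ p.2)
  have hd_sum : ∑ s, dC x n s = (n:ℝ) := by
    unfold dC
    rw [Finset.sum_comm]
    simp
  have hd_c : ∀ t, dC x n t = ∑ a, cC x n (a, t) := by
    intro t
    unfold dC cC
    rw [Finset.sum_comm]
    simp [ite_and]
  -- entropy rewrites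
  have e1 : ent (empFst x n) = ∑ a, Real.negMulLog ((∑ b, cC x n (a, b)) / n) := by
    apply Finset.sum_congr rfl
    intro a _
    congr 1
    unfold empFst empPair cC
    rw [Finset.sum_div]
  have e2 : ent (empSnd x n) = ∑ t, Real.negMulLog (dC x n t / n) := by
    apply Finset.sum_congr rfl
    intro t _
    congr 1
    rw [hd_c]
    unfold empSnd empPair cC
    rw [Finset.sum_div]
  have e3 : ent (fun p : A × A => empPair x n p.1 p.2)
      = ∑ p : A × A, Real.negMulLog (cC x n p / n) := rfl
  -- split the Markov log-likelihood sum
  have hsplit : ∑ p : A × A, cC x n p * Real.log (cC x n p / ∑ b, cC x n (p.1, b))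
      = ∑ p : A × A, cC x n p * Real.log (cC x n p / n)
        - ∑ a, (∑ b, cC x n (a, b)) * Real.log ((∑ b, cC x n (a, b)) / n) := by
    have hrow : ∑ p : A × A, cC x n p * Real.log ((∑ b, cC x n (p.1, b)) / n)
        = ∑ a, (∑ b, cC x n (a, b)) * Real.log ((∑ b, cC x n (a, b)) / n) := by
      rw [Fintype.sum_prod_type]
      refine Finset.sum_congr rfl fun a _ => ?_
      rw [Finset.sum_mul]
    rw [← hrow, ← Finset.sum_sub_distrib]
    apply Finset.sum_congr rfl
    intro p _
    rcases eq_or_lt_of_le (hcpos p) with h | h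
    · rw [← h]; simp
    · have hcr : 0 < ∑ b, cC x n (p.1, b) := lt_of_lt_of_le h (hcN p)
      rw [Real.log_div (ne_of_gt h) (ne_of_gt hcr), Real.log_div (ne_of_gt h) hn',
        Real.log_div (ne_of_gt hcr) hn']
      ring
  rw [hd_sum, hsplit]
  unfold pluginMI
  rw [e1, e2, e3]
  have h1 := mul_sum_negMulLog (n:ℝ) hn' (fun a => ∑ b, cC x n (a, b))
  have h2 := mul_sum_negMulLog (n:ℝ) hn' (dC x n)
  have h3 := mul_sum_negMulLog (n:ℝ) hn' (cC x n)
  linear_combination -2 * h1 - 2 * h2 + 2 * h3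

/-- **Proposition 1** (Kontoyiannis–Skoularidou): the likelihood-ratio statistic
`Δ_n`, for testing the i.i.d. null model within the all-positive Markov model,
is exactly equal to `2n` times the plug-in estimator of the mutual information. -/
theorem stmt4 {Ω A : Type*} [MeasurableSpace Ω]
    [MeasurableSpace A] [Fintype A] [DecidableEq A]
    (μ : Measure Ω) [IsProbabilityMeasure μ]
    (X : ℕ → Ω → A) (Q : A → A → ℝ)
    (hXmeas : ∀ i, Measurable (X i))
    (hQpos : ∀ a a', 0 < Q a a') (hQrow : ∀ a, ∑ a', Q a a' = 1)
    (hMarkov : IsMarkov μ X Q)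
    (n : ℕ) (hn : 0 < n) (ω : Ω) :
    2 * (sSup {L : ℝ | ∃ Q' : A → A → ℝ, (∀ a a', 0 < Q' a a') ∧
            (∀ a, ∑ a', Q' a a' = 1) ∧
            L = ∑ i ∈ Finset.range n, Real.log (Q' (X i ω) (X (i + 1) ω))}
        - sSup {L : ℝ | ∃ φ : A → ℝ, (∀ a, 0 < φ a) ∧ (∑ a, φ a = 1) ∧
            L = ∑ i ∈ Finset.range n, Real.log (φ (X (i + 1) ω))})
      = 2 * n * pluginMI (fun i => X i ω) n := by
  classical
  have hA : Nonempty A := ⟨X 0 ω⟩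
  have h1 := sSup_mat n (fun i => X i ω) (fun i => X (i + 1) ω)
  have h2 := sSup_vec n (fun i => X (i + 1) ω)
  rw [h1, h2]
  exact key_identity (fun i => X i ω) n hn

end
end

section
/- Let {(X_n,Y_n)} be a Markov chain of memory length k ≥ 1 with all-positive transition matrix on the product of finite alphabets A × B. Let Θ parametrize all all-positive k-th order transition matrices Q_θ(a_0,b_0 | a_{−k}^{−1}, b_{−k}^{−1}) on A × B, let Φ parametrize the null model of transition matrices that factorize as Q(a_0,b_0 | a_{−k}^{−1}, b_{−k}^{−1}) = Q^x(a_0 | a_{−k}^{−1}, b_{−k}^{−1}) · Q^y(b_0 | b_{−k}^{−1}) with all-positive factors, embedded in Θ via h, and let L_n((X,Y)_{−k+1}^n; θ) = log ∏_{i=1}^n Q_θ(X_i,Y_i | X_{i−k}^{i−1}, Y_{i−k}^{i−1}) be the conditional log-likelihood. Then the likelihood-ratio statistic Δ_n = 2[ max_{θ∈Θ} L_n(·;θ) − max_{φ∈Φ} L_n(·;h(φ)) ] satisfies Δ_n = 2n Î_n^{(k)}(X → Y). -/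
open MeasureTheory ProbabilityTheory Filter Finset Topology
open scoped Pointwise
open scoped NNReal

noncomputable section

/-- `Z` is a homogeneous Markov chain of memory length (at most) `k` with
transition matrix `Q` (and arbitrary initial distribution). -/
def IsMarkovK {Ω S : Type*} [MeasurableSpace Ω] (μ : Measure Ω) (Z : ℕ → Ω → S)
    (k : ℕ) (Q : (Fin k → S) → S → ℝ) : Prop :=
  ∀ (n : ℕ) (w : Fin (n + k) → S) (s : S),
    (μ {ω | (∀ i : Fin (n + k), Z (i : ℕ) ω = w i) ∧ Z (n + k) ω = s}).toReal
      = Q (fun j => w (Fin.natAdd n j)) s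
        * (μ {ω | ∀ i : Fin (n + k), Z (i : ℕ) ω = w i}).toReal

/-- `Z` is a (strictly) stationary process. -/
def IsStationaryProc {Ω S : Type*} [MeasurableSpace Ω] (μ : Measure Ω) (Z : ℕ → Ω → S) : Prop :=
  ∀ (n : ℕ) (w : Fin n → S),
    μ {ω | ∀ i : Fin n, Z (i : ℕ) ω = w i} = μ {ω | ∀ i : Fin n, Z ((i : ℕ) + 1) ω = w i}

/-- The first-order transition matrix on `k`-blocks induced by an order-`k`
transition matrix `Q`. -/
def blockMat {S : Type*} [Fintype S] [DecidableEq S] (k : ℕ) (hk : 0 < k)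
    (Q : (Fin k → S) → S → ℝ) : Matrix (Fin k → S) (Fin k → S) ℝ :=
  Matrix.of fun u v =>
    if ∀ i j : Fin k, (j : ℕ) = (i : ℕ) + 1 → v i = u j
    then Q u (v ⟨k - 1, Nat.sub_lt hk Nat.one_pos⟩) else 0

/-- Irreducibility and aperiodicity of an order-`k` chain, expressed as
primitivity of the induced chain on `k`-blocks. -/
def IrreducibleAperiodicK {S : Type*} [Fintype S] [DecidableEq S] (k : ℕ) (hk : 0 < k)
    (Q : (Fin k → S) → S → ℝ) : Prop :=
  ∃ N : ℕ, 0 < N ∧ ∀ u v : Fin k → S, 0 < (blockMat k hk Q ^ N) u v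

/-- Marginal of a block distribution on the full `Y`-block. -/
def yFull {A B : Type*} [Fintype A] (k : ℕ) (p : (Fin (k + 1) → A × B) → ℝ)
    (b : Fin (k + 1) → B) : ℝ :=
  ∑ a : Fin (k + 1) → A, p fun i => (a i, b i)

/-- Marginal of a block distribution on the first `k` `Y`-coordinates. -/
def yFront {A B : Type*} [Fintype A] [Fintype B] (k : ℕ) (p : (Fin (k + 1) → A × B) → ℝ)
    (b : Fin k → B) : ℝ :=
  ∑ s : B, yFull k p (Fin.snoc b s : Fin (k + 1) → B)

/-- Marginal of a block distribution on the full `X`-block together with the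
first `k` `Y`-coordinates. -/
def xyFront {A B : Type*} [Fintype B] (k : ℕ) (p : (Fin (k + 1) → A × B) → ℝ)
    (a : Fin (k + 1) → A) (b : Fin k → B) : ℝ :=
  ∑ s : B, p fun i => (a i, (Fin.snoc b s : Fin (k + 1) → B) i)

/-- The log-ratio appearing in the conditional mutual information
`I(Y₀; X₋ₖ⁰ ∣ Y₋ₖ⁻¹)` of a `(k+1)`-block distribution `p`. -/
def logRatio {A B : Type*} [Fintype A] [Fintype B] (k : ℕ)
    (p : (Fin (k + 1) → A × B) → ℝ) (w : Fin (k + 1) → A × B) : ℝ :=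
  Real.log ((p w * yFront k p fun j => (w j.castSucc).2) /
    (xyFront k p (fun i => (w i).1) (fun j => (w j.castSucc).2)
      * yFull k p fun i => (w i).2))

/-- The conditional mutual information `I(Y₀; X₋ₖ⁰ ∣ Y₋ₖ⁻¹)` of a distribution
`p` of a `(k+1)`-block of pairs. -/
def condMIk {A B : Type*} [Fintype A] [Fintype B] (k : ℕ)
    (p : (Fin (k + 1) → A × B) → ℝ) : ℝ :=
  ∑ w : Fin (k + 1) → A × B, p w * logRatio k p w

/-- Empirical distribution of `l`-blocks of the sample `z 0, …, z (n+l-2)`. -/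
def empBlock {S : Type*} [DecidableEq S] (z : ℕ → S) (l n : ℕ) (w : Fin l → S) : ℝ :=
  (∑ i ∈ Finset.range n, if ∀ j : Fin l, z (i + (j : ℕ)) = w j then (1 : ℝ) else 0) / n

/-- The plug-in estimator of the directed information rate, with memory `k`,
computed from the sample `z 0, …, z (n+k-1)`. -/
def pluginDI {A B : Type*} [Fintype A] [Fintype B] [DecidableEq A] [DecidableEq B]
    (z : ℕ → A × B) (k n : ℕ) : ℝ :=
  condMIk k (empBlock z (k + 1) n)

/-- Distribution of a finite-valued observable. -/
def distOf {Ω T : Type*} [MeasurableSpace Ω] [Fintype T] (μ : Measure Ω) (f : Ω → T) : T → ℝ :=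
  fun t => (μ (f ⁻¹' {t})).toReal

/-- Entropy of (the distribution of) a finite-valued observable. -/
def entOf {Ω T : Type*} [MeasurableSpace Ω] [Fintype T] (μ : Measure Ω) (f : Ω → T) : ℝ :=
  ent (distOf μ f)

/-- The directed information `I(X₁ⁿ → Y₁ⁿ) = H(Y₁ⁿ) − ∑ᵢ H(Yᵢ ∣ Y₁ⁱ⁻¹, X₁ⁱ)`,
with the conditional entropies written as differences of joint entropies. -/
def DIsum {Ω A B : Type*} [MeasurableSpace Ω] [Fintype A] [Fintype B]
    (μ : Measure Ω) (Z : ℕ → Ω → A × B) (n : ℕ) : ℝ :=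
  entOf μ (fun ω => fun i : Fin n => (Z (i : ℕ) ω).2)
    - ∑ i ∈ Finset.range n,
        (entOf μ (fun ω =>
            ((fun j : Fin (i + 1) => (Z (j : ℕ) ω).1),
              fun j : Fin (i + 1) => (Z (j : ℕ) ω).2))
          - entOf μ (fun ω =>
            ((fun j : Fin (i + 1) => (Z (j : ℕ) ω).1),
              fun j : Fin i => (Z (j : ℕ) ω).2)))

/-- The distribution of an `l`-block of the process `Z`. -/
def blockDist {Ω S : Type*} [MeasurableSpace Ω] (μ : Measure Ω) (Z : ℕ → Ω → S) (l : ℕ) :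
    (Fin l → S) → ℝ :=
  fun w => (μ {ω | ∀ i : Fin l, Z (i : ℕ) ω = w i}).toReal

set_option linter.unusedSectionVars false

namespace Stmt15Aux

lemma sum_fiber1 {W : Type*} [Fintype W] [DecidableEq W] (n : ℕ) (F : ℕ → W) (h : W → ℝ) :
    ∑ w : W, (∑ i ∈ Finset.range n, if F i = w then (1:ℝ) else 0) * h w
      = ∑ i ∈ Finset.range n, h (F i) := by
  simp_rw [Finset.sum_mul]
  rw [Finset.sum_comm]
  refine Finset.sum_congr rfl fun i _ => ?_
  simp [ite_mul, Finset.sum_ite_eq]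

lemma sum_fiber2 {U S : Type*} [Fintype U] [Fintype S] [DecidableEq U] [DecidableEq S]
    (n : ℕ) (f : ℕ → U) (g : ℕ → S) (h : U → S → ℝ) :
    ∑ u : U, ∑ t : S, (∑ i ∈ Finset.range n, if f i = u ∧ g i = t then (1:ℝ) else 0) * h u t
      = ∑ i ∈ Finset.range n, h (f i) (g i) := by
  have := sum_fiber1 n (fun i => (f i, g i)) (fun p => h p.1 p.2)
  rw [Fintype.sum_prod_type] at this
  simpa [Prod.ext_iff] using this

variable {U S : Type*} [Fintype U] [Fintype S] [DecidableEq U] [DecidableEq S]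

def cnt (n : ℕ) (f : ℕ → U) (g : ℕ → S) (u : U) (t : S) : ℝ :=
  ∑ i ∈ Finset.range n, if f i = u ∧ g i = t then 1 else 0

def mar (n : ℕ) (f : ℕ → U) (u : U) : ℝ :=
  ∑ i ∈ Finset.range n, if f i = u then 1 else 0

lemma cnt_nonneg (n : ℕ) (f : ℕ → U) (g : ℕ → S) (u : U) (t : S) : 0 ≤ cnt n f g u t :=
  Finset.sum_nonneg fun _ _ => by positivity

lemma mar_nonneg (n : ℕ) (f : ℕ → U) (u : U) : 0 ≤ mar n f u :=
  Finset.sum_nonneg fun _ _ => by positivity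

lemma mar_eq_sum_cnt (n : ℕ) (f : ℕ → U) (g : ℕ → S) (u : U) :
    mar n f u = ∑ t, cnt n f g u t := by
  unfold mar cnt
  rw [Finset.sum_comm]
  refine Finset.sum_congr rfl fun i _ => ?_
  simp [ite_and, Finset.sum_ite_eq]

lemma one_le_cnt {n : ℕ} {f : ℕ → U} {g : ℕ → S} {i : ℕ} (hi : i < n) :
    1 ≤ cnt n f g (f i) (g i) := by
  have h := Finset.single_le_sum (f := fun j => if f j = f i ∧ g j = g i then (1:ℝ) else 0)
    (fun j _ => by positivity) (Finset.mem_range.2 hi)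
  simpa [cnt] using h

lemma one_le_mar {n : ℕ} {f : ℕ → U} {i : ℕ} (hi : i < n) :
    1 ≤ mar n f (f i) := by
  have h := Finset.single_le_sum (f := fun j => if f j = f i then (1:ℝ) else 0)
    (fun j _ => by positivity) (Finset.mem_range.2 hi)
  simpa [mar] using h

lemma gibbs (c : S → ℝ) (hc : ∀ t, 0 ≤ c t) (Q : S → ℝ) (hQ : ∀ t, 0 < Q t)
    (hQ1 : ∑ t, Q t = 1) :
    ∑ t, c t * Real.log (Q t) ≤ ∑ t, c t * Real.log (c t / (∑ t, c t)) := by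
  set m := ∑ t, c t with hm
  rcases eq_or_lt_of_le (Finset.sum_nonneg fun t _ => hc t) with h0 | hmpos
  · have hz : ∀ t ∈ Finset.univ, c t = 0 :=
      (Finset.sum_eq_zero_iff_of_nonneg (fun t _ => hc t)).mp h0.symm
    have : ∀ t, c t = 0 := fun t => hz t (Finset.mem_univ t)
    simp [this]
  · have key : ∀ t, c t * Real.log (Q t) - c t * Real.log (c t / m) ≤ Q t * m - c t := by
      intro t
      rcases eq_or_lt_of_le (hc t) with hc0 | hcpos
      · rw [← hc0]
        simp only [zero_mul, sub_zero, sub_self, zero_sub, neg_zero]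
        exact mul_nonneg (hQ t).le hmpos.le
      · have h1 : c t * Real.log (Q t) - c t * Real.log (c t / m) =
            c t * Real.log (Q t * m / c t) := by
          rw [← mul_sub, ← Real.log_div (ne_of_gt (hQ t))
            (ne_of_gt (div_pos hcpos hmpos)), div_div_eq_mul_div]
        rw [h1]
        calc c t * Real.log (Q t * m / c t) ≤ c t * (Q t * m / c t - 1) :=
              mul_le_mul_of_nonneg_left
                (Real.log_le_sub_one_of_pos (div_pos (mul_pos (hQ t) hmpos) hcpos)) (hc t)
          _ = Q t * m - c t := by field_simp
    have hsum := Finset.sum_le_sum (s := Finset.univ) (fun t _ => key t)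
    rw [Finset.sum_sub_distrib] at hsum
    have hzero : ∑ t, (Q t * m - c t) = 0 := by
      rw [Finset.sum_sub_distrib, ← Finset.sum_mul, hQ1, ← hm]; ring
    rw [hzero] at hsum
    linarith


lemma logLik_le (n : ℕ) (f : ℕ → U) (g : ℕ → S) :
    ∀ L ∈ {L : ℝ | ∃ Q : U → S → ℝ, (∀ u t, 0 < Q u t) ∧ (∀ u, ∑ t, Q u t = 1) ∧
        L = ∑ i ∈ Finset.range n, Real.log (Q (f i) (g i))},
      L ≤ ∑ i ∈ Finset.range n, Real.log (cnt n f g (f i) (g i) / mar n f (f i)) := by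
  rintro L ⟨Q, hQpos, hQ1, rfl⟩
  rw [← sum_fiber2 n f g (fun u t => Real.log (Q u t)),
    ← sum_fiber2 n f g (fun u t => Real.log (cnt n f g u t / mar n f u))]
  refine Finset.sum_le_sum fun u _ => ?_
  have := gibbs (fun t => cnt n f g u t) (fun t => cnt_nonneg n f g u t)
    (fun t => Q u t) (fun t => hQpos u t) (hQ1 u)
  rwa [← mar_eq_sum_cnt n f g u] at this

lemma logLikSet_bddAbove (n : ℕ) (f : ℕ → U) (g : ℕ → S) :
    BddAbove {L : ℝ | ∃ Q : U → S → ℝ, (∀ u t, 0 < Q u t) ∧ (∀ u, ∑ t, Q u t = 1) ∧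
        L = ∑ i ∈ Finset.range n, Real.log (Q (f i) (g i))} :=
  ⟨_, logLik_le n f g⟩

lemma logLikSet_nonempty [Nonempty S] (n : ℕ) (f : ℕ → U) (g : ℕ → S) :
    Set.Nonempty {L : ℝ | ∃ Q : U → S → ℝ, (∀ u t, 0 < Q u t) ∧ (∀ u, ∑ t, Q u t = 1) ∧
        L = ∑ i ∈ Finset.range n, Real.log (Q (f i) (g i))} := by
  have hK : (0:ℝ) < (Fintype.card S : ℝ) := by exact_mod_cast Fintype.card_pos
  refine ⟨∑ i ∈ Finset.range n, Real.log ((Fintype.card S : ℝ)⁻¹),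
    fun _ _ => (Fintype.card S : ℝ)⁻¹, fun _ _ => by positivity, fun _ => ?_, rfl⟩
  rw [Finset.sum_const, Finset.card_univ, nsmul_eq_mul, mul_inv_cancel₀ (ne_of_gt hK)]

lemma supLogLik [Nonempty S] (n : ℕ) (f : ℕ → U) (g : ℕ → S) :
    sSup {L : ℝ | ∃ Q : U → S → ℝ, (∀ u t, 0 < Q u t) ∧ (∀ u, ∑ t, Q u t = 1) ∧
        L = ∑ i ∈ Finset.range n, Real.log (Q (f i) (g i))}
      = ∑ i ∈ Finset.range n, Real.log (cnt n f g (f i) (g i) / mar n f (f i)) := by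
  set T := ∑ i ∈ Finset.range n, Real.log (cnt n f g (f i) (g i) / mar n f (f i)) with hT
  set SS := {L : ℝ | ∃ Q : U → S → ℝ, (∀ u t, 0 < Q u t) ∧ (∀ u, ∑ t, Q u t = 1) ∧
        L = ∑ i ∈ Finset.range n, Real.log (Q (f i) (g i))} with hSS
  have hK : (0:ℝ) < (Fintype.card S : ℝ) := by exact_mod_cast Fintype.card_pos
  have hub : ∀ L ∈ SS, L ≤ T := logLik_le n f g
  have hne : SS.Nonempty := logLikSet_nonempty n f g
  have hbdd : BddAbove SS := ⟨T, hub⟩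
  refine le_antisymm (csSup_le hne hub) ?_
  -- lower bound via perturbation
  have hmem : ∀ δ : ℝ, 0 < δ →
      (∑ i ∈ Finset.range n,
        Real.log ((cnt n f g (f i) (g i) + δ) / (mar n f (f i) + δ * Fintype.card S))) ∈ SS := by
    intro δ hδ
    refine ⟨fun u t => (cnt n f g u t + δ) / (mar n f u + δ * Fintype.card S),
      fun u t => ?_, fun u => ?_, rfl⟩
    · have h1 : 0 < cnt n f g u t + δ := by linarith [cnt_nonneg n f g u t]
      have h2 : 0 < mar n f u + δ * Fintype.card S := by
        have := mar_nonneg n f u; nlinarith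
      exact div_pos h1 h2
    · have h2 : mar n f u + δ * Fintype.card S ≠ 0 := by
        have := mar_nonneg n f u; positivity
      rw [← Finset.sum_div, div_eq_one_iff_eq h2, Finset.sum_add_distrib,
        ← mar_eq_sum_cnt n f g u, Finset.sum_const, Finset.card_univ, nsmul_eq_mul]
      ring
  have htend : Tendsto (fun δ : ℝ =>
      ∑ i ∈ Finset.range n,
        Real.log ((cnt n f g (f i) (g i) + δ) / (mar n f (f i) + δ * Fintype.card S)))
      (𝓝[>] (0:ℝ)) (𝓝 T) := by
    rw [hT]
    refine tendsto_finset_sum _ fun i hi => ?_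
    have hi' := Finset.mem_range.1 hi
    have hc : (0:ℝ) < cnt n f g (f i) (g i) := lt_of_lt_of_le one_pos (one_le_cnt hi')
    have hm : (0:ℝ) < mar n f (f i) := lt_of_lt_of_le one_pos (one_le_mar hi')
    have hcont : ContinuousAt (fun δ : ℝ =>
        Real.log ((cnt n f g (f i) (g i) + δ) / (mar n f (f i) + δ * Fintype.card S))) 0 := by
      have hden : (fun δ : ℝ => mar n f (f i) + δ * Fintype.card S) 0 ≠ 0 := by
        simpa using ne_of_gt hm
      have h1 : ContinuousAt (fun δ : ℝ =>
          (cnt n f g (f i) (g i) + δ) / (mar n f (f i) + δ * Fintype.card S)) 0 :=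
        ContinuousAt.div (by fun_prop) (by fun_prop) hden
      refine (Real.continuousAt_log ?_).comp h1
      simpa using ne_of_gt (div_pos hc hm)
    have := hcont.tendsto
    simp only [add_zero, zero_mul] at this
    exact this.mono_left nhdsWithin_le_nhds
  refine le_of_tendsto htend ?_
  filter_upwards [self_mem_nhdsWithin] with δ hδ
  exact le_csSup hbdd (hmem δ hδ)

end Stmt15Aux


section MargAux

open Stmt15Aux

lemma fin_forall_succ {l : ℕ} (P : Fin (l+1) → Prop) :
    (∀ j, P j) ↔ (∀ j : Fin l, P j.castSucc) ∧ P (Fin.last l) := by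
  constructor
  · intro h; exact ⟨fun j => h _, h _⟩
  · rintro ⟨h1, h2⟩ j
    induction j using Fin.lastCases with
    | last => exact h2
    | cast j => exact h1 j

variable {A B : Type*} [Fintype A] [Fintype B] [DecidableEq A] [DecidableEq B]

lemma sum_ite_exists {T : Type*} [Fintype T] [DecidableEq T] (t0 : T) (D : Prop) [Decidable D] :
    ∑ t : T, (if t0 = t ∧ D then (1:ℝ) else 0) = if D then 1 else 0 := by
  by_cases hD : D <;> simp [hD, Finset.sum_ite_eq]

lemma sum_ite_exists' {T : Type*} [Fintype T] [DecidableEq T] (t0 : T) (D : Prop) [Decidable D] :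
    ∑ t : T, (if D ∧ t0 = t then (1:ℝ) else 0) = if D then 1 else 0 := by
  by_cases hD : D <;> simp [hD, Finset.sum_ite_eq]

lemma n_mul_empBlock (z : ℕ → A × B) (k n : ℕ) (hn : 0 < n) (w : Fin (k+1) → A × B) :
    (n:ℝ) * empBlock z (k+1) n w
      = ∑ i ∈ Finset.range n, if ∀ j : Fin (k+1), z (i + (j:ℕ)) = w j then (1:ℝ) else 0 := by
  have hn' : (n:ℝ) ≠ 0 := Nat.cast_ne_zero.2 hn.ne'
  rw [empBlock, mul_comm, div_mul_cancel₀ _ hn']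

lemma n_mul_yFull (z : ℕ → A × B) (k n : ℕ) (hn : 0 < n) (c : Fin (k+1) → B) :
    (n:ℝ) * yFull k (empBlock z (k+1) n) c
      = ∑ i ∈ Finset.range n,
          if ∀ j : Fin (k+1), (z (i + (j:ℕ))).2 = c j then (1:ℝ) else 0 := by
  rw [yFull, Finset.mul_sum]
  simp_rw [n_mul_empBlock z k n hn]
  rw [Finset.sum_comm]
  refine Finset.sum_congr rfl fun i _ => ?_
  have key : ∀ a : Fin (k+1) → A,
      ((∀ j : Fin (k+1), z (i + (j:ℕ)) = (a j, c j)) ↔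
        ((fun j : Fin (k+1) => (z (i + (j:ℕ))).1) = a ∧
          ∀ j : Fin (k+1), (z (i + (j:ℕ))).2 = c j)) := by
    intro a
    simp only [Prod.ext_iff, funext_iff]
    constructor
    · intro h; exact ⟨fun j => (h j).1, fun j => (h j).2⟩
    · rintro ⟨h1, h2⟩ j; exact ⟨h1 j, h2 j⟩
  simp_rw [key]
  exact sum_ite_exists _ _

lemma n_mul_yFront (z : ℕ → A × B) (k n : ℕ) (hn : 0 < n) (b : Fin k → B) :
    (n:ℝ) * yFront k (empBlock z (k+1) n) b
      = ∑ i ∈ Finset.range n,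
          if ∀ j : Fin k, (z (i + (j:ℕ))).2 = b j then (1:ℝ) else 0 := by
  rw [yFront, Finset.mul_sum]
  simp_rw [n_mul_yFull z k n hn]
  rw [Finset.sum_comm]
  refine Finset.sum_congr rfl fun i _ => ?_
  have key : ∀ s : B,
      ((∀ j : Fin (k+1), (z (i + (j:ℕ))).2 = (Fin.snoc b s : Fin (k+1) → B) j) ↔
        ((∀ j : Fin k, (z (i + (j:ℕ))).2 = b j) ∧ (z (i + k)).2 = s)) := by
    intro s
    rw [fin_forall_succ (fun j => (z (i + (j:ℕ))).2 = (Fin.snoc b s : Fin (k+1) → B) j)]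
    simp [Fin.snoc_castSucc, Fin.snoc_last, Fin.coe_castSucc, Fin.val_last]
  simp_rw [key]
  exact sum_ite_exists' _ _

lemma n_mul_xyFront (z : ℕ → A × B) (k n : ℕ) (hn : 0 < n)
    (a : Fin (k+1) → A) (b : Fin k → B) :
    (n:ℝ) * xyFront k (empBlock z (k+1) n) a b
      = ∑ i ∈ Finset.range n,
          if (∀ j : Fin (k+1), (z (i + (j:ℕ))).1 = a j) ∧
              (∀ j : Fin k, (z (i + (j:ℕ))).2 = b j) then (1:ℝ) else 0 := by
  rw [xyFront, Finset.mul_sum]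
  simp_rw [n_mul_empBlock z k n hn]
  rw [Finset.sum_comm]
  refine Finset.sum_congr rfl fun i _ => ?_
  have key : ∀ s : B,
      ((∀ j : Fin (k+1), z (i + (j:ℕ)) = (a j, (Fin.snoc b s : Fin (k+1) → B) j)) ↔
        (((∀ j : Fin (k+1), (z (i + (j:ℕ))).1 = a j) ∧
            (∀ j : Fin k, (z (i + (j:ℕ))).2 = b j)) ∧ (z (i + k)).2 = s)) := by
    intro s
    simp only [Prod.ext_iff]
    rw [fin_forall_succ (fun j => (z (i + (j:ℕ))).1 = a j ∧ (z (i + (j:ℕ))).2 = (Fin.snoc b s : Fin (k+1) → B) j)]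
    simp only [Fin.snoc_castSucc, Fin.snoc_last, Fin.coe_castSucc, Fin.val_last]
    constructor
    · rintro ⟨h1, h2⟩
      exact ⟨⟨fun j => by
          induction j using Fin.lastCases with
          | last => simpa using h2.1
          | cast j => exact (h1 j).1, fun j => (h1 j).2⟩, h2.2⟩
    · rintro ⟨⟨h1, h2⟩, h3⟩
      exact ⟨fun j => ⟨by simpa using h1 j.castSucc, h2 j⟩, by simpa using h1 (Fin.last k), h3⟩
  simp_rw [key]
  exact sum_ite_exists' _ _


lemma key_cond1 (z : ℕ → A × B) (k : ℕ) (i i' : ℕ) :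
    ((fun j : Fin k => z (i' + (j:ℕ))) = (fun j : Fin k => z (i + (j:ℕ)))
        ∧ z (i' + k) = z (i + k))
      ↔ ∀ j : Fin (k+1), z (i' + (j:ℕ)) = z (i + (j:ℕ)) := by
  rw [funext_iff, fin_forall_succ (fun j : Fin (k+1) => z (i' + (j:ℕ)) = z (i + (j:ℕ)))]
  simp

lemma key_cond3 (z : ℕ → A × B) (k : ℕ) (i i' : ℕ) :
    ((fun j : Fin k => (z (i' + (j:ℕ))).2) = (fun j : Fin k => (z (i + (j:ℕ))).2)
        ∧ (z (i' + k)).2 = (z (i + k)).2)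
      ↔ ∀ j : Fin (k+1), (z (i' + (j:ℕ))).2 = (z (i + (j:ℕ))).2 := by
  rw [funext_iff,
    fin_forall_succ (fun j : Fin (k+1) => (z (i' + (j:ℕ))).2 = (z (i + (j:ℕ))).2)]
  simp

lemma key_cond2 (z : ℕ → A × B) (k : ℕ) (i i' : ℕ) :
    ((fun j : Fin k => z (i' + (j:ℕ))) = (fun j : Fin k => z (i + (j:ℕ)))
        ∧ (z (i' + k)).1 = (z (i + k)).1)
      ↔ ((∀ j : Fin (k+1), (z (i' + (j:ℕ))).1 = (z (i + (j:ℕ))).1)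
          ∧ ∀ j : Fin k, (z (i' + (j:ℕ))).2 = (z (i + ((j.castSucc : Fin (k+1)):ℕ))).2) := by
  rw [funext_iff]
  simp only [Fin.coe_castSucc]
  constructor
  · rintro ⟨h1, h2⟩
    refine ⟨fun j => ?_, fun j => by rw [h1 j]⟩
    induction j using Fin.lastCases with
    | last => simpa using h2
    | cast j => simpa using congrArg Prod.fst (h1 j)
  · rintro ⟨h1, h2⟩
    refine ⟨fun j => Prod.ext_iff.2 ⟨by simpa using h1 j.castSucc, h2 j⟩, ?_⟩
    simpa using h1 (Fin.last k)

lemma key_cond4 (z : ℕ → A × B) (k : ℕ) (i i' : ℕ) :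
    ((fun j : Fin k => (z (i' + (j:ℕ))).2) = (fun j : Fin k => (z (i + (j:ℕ))).2))
      ↔ ∀ j : Fin k, (z (i' + (j:ℕ))).2 = (z (i + ((j.castSucc : Fin (k+1)):ℕ))).2 := by
  rw [funext_iff]
  simp

lemma per_i (z : ℕ → A × B) (k n : ℕ) (hn : 0 < n) (i : ℕ) (hi : i < n) :
    Real.log (cnt n (fun i' => fun j : Fin k => z (i' + (j:ℕ))) (fun i' => z (i' + k))
        (fun j : Fin k => z (i + (j:ℕ))) (z (i + k))
      / mar n (fun i' => fun j : Fin k => z (i' + (j:ℕ))) (fun j : Fin k => z (i + (j:ℕ))))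
    - (Real.log (cnt n (fun i' => fun j : Fin k => z (i' + (j:ℕ))) (fun i' => (z (i' + k)).1)
          (fun j : Fin k => z (i + (j:ℕ))) ((z (i + k)).1)
        / mar n (fun i' => fun j : Fin k => z (i' + (j:ℕ))) (fun j : Fin k => z (i + (j:ℕ))))
      + Real.log (cnt n (fun i' => fun j : Fin k => (z (i' + (j:ℕ))).2)
          (fun i' => (z (i' + k)).2)
          (fun j : Fin k => (z (i + (j:ℕ))).2) ((z (i + k)).2)
        / mar n (fun i' => fun j : Fin k => (z (i' + (j:ℕ))).2)
          (fun j : Fin k => (z (i + (j:ℕ))).2)))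
    = logRatio k (empBlock z (k+1) n) (fun j : Fin (k+1) => z (i + (j:ℕ))) := by
  have hn' : (n:ℝ) ≠ 0 := Nat.cast_ne_zero.2 hn.ne'
  set p := empBlock z (k+1) n with hp
  set W : Fin (k+1) → A × B := fun j => z (i + (j:ℕ)) with hW
  set c1 := cnt n (fun i' => fun j : Fin k => z (i' + (j:ℕ))) (fun i' => z (i' + k))
      (fun j : Fin k => z (i + (j:ℕ))) (z (i + k)) with hc1def
  set cx := cnt n (fun i' => fun j : Fin k => z (i' + (j:ℕ))) (fun i' => (z (i' + k)).1)
      (fun j : Fin k => z (i + (j:ℕ))) ((z (i + k)).1) with hcxdef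
  set cy := cnt n (fun i' => fun j : Fin k => (z (i' + (j:ℕ))).2) (fun i' => (z (i' + k)).2)
      (fun j : Fin k => (z (i + (j:ℕ))).2) ((z (i + k)).2) with hcydef
  set m1 := mar n (fun i' => fun j : Fin k => z (i' + (j:ℕ)))
      (fun j : Fin k => z (i + (j:ℕ))) with hm1def
  set my := mar n (fun i' => fun j : Fin k => (z (i' + (j:ℕ))).2)
      (fun j : Fin k => (z (i + (j:ℕ))).2) with hmydef
  -- positivity
  have h1c1 : (1:ℝ) ≤ c1 := one_le_cnt hi
  have h1cx : (1:ℝ) ≤ cx := one_le_cnt hi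
  have h1cy : (1:ℝ) ≤ cy := one_le_cnt hi
  have h1m1 : (1:ℝ) ≤ m1 := one_le_mar hi
  have h1my : (1:ℝ) ≤ my := one_le_mar hi
  have hc10 : c1 ≠ 0 := by linarith
  have hcx0 : cx ≠ 0 := by linarith
  have hcy0 : cy ≠ 0 := by linarith
  have hm10 : m1 ≠ 0 := by linarith
  have hmy0 : my ≠ 0 := by linarith
  -- count identities
  have hc1 : c1 = (n:ℝ) * p W := by
    rw [hc1def, hp, hW, n_mul_empBlock z k n hn, cnt]
    exact Finset.sum_congr rfl fun i' _ => if_congr (key_cond1 z k i i') rfl rfl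
  have hcx : cx = (n:ℝ) * xyFront k p (fun j => (W j).1) (fun j => (W j.castSucc).2) := by
    rw [hcxdef, hp, hW, n_mul_xyFront z k n hn, cnt]
    exact Finset.sum_congr rfl fun i' _ => if_congr (key_cond2 z k i i') rfl rfl
  have hcy : cy = (n:ℝ) * yFull k p (fun j => (W j).2) := by
    rw [hcydef, hp, hW, n_mul_yFull z k n hn, cnt]
    exact Finset.sum_congr rfl fun i' _ => if_congr (key_cond3 z k i i') rfl rfl
  have hmy : my = (n:ℝ) * yFront k p (fun j => (W j.castSucc).2) := by
    rw [hmydef, hp, hW, n_mul_yFront z k n hn, mar]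
    exact Finset.sum_congr rfl fun i' _ => if_congr (key_cond4 z k i i') rfl rfl
  -- express the marginals as ratios
  have hpW : p W = c1 / n := by rw [hc1, mul_comm, mul_div_cancel_right₀ _ hn']
  have hxyF : xyFront k p (fun j => (W j).1) (fun j => (W j.castSucc).2) = cx / n := by
    rw [hcx, mul_comm, mul_div_cancel_right₀ _ hn']
  have hyFull : yFull k p (fun j => (W j).2) = cy / n := by
    rw [hcy, mul_comm, mul_div_cancel_right₀ _ hn']
  have hyF : yFront k p (fun j => (W j.castSucc).2) = my / n := by
    rw [hmy, mul_comm, mul_div_cancel_right₀ _ hn']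
  rw [logRatio, hpW, hxyF, hyFull, hyF]
  have harg : (c1 / n * (my / n)) / (cx / n * (cy / n)) = (c1 * my) / (cx * cy) := by
    field_simp
  rw [harg, Real.log_div (mul_ne_zero hc10 hmy0) (mul_ne_zero hcx0 hcy0),
    Real.log_mul hc10 hmy0, Real.log_mul hcx0 hcy0,
    Real.log_div hc10 hm10, Real.log_div hcx0 hm10, Real.log_div hcy0 hmy0]
  ring

end MargAux

/-- **Proposition (DILRT)** (Kontoyiannis–Skoularidou): the likelihood-ratio
statistic `Δ_n`, for testing the factorized (no causal influence) null model
within the all-positive order-`k` Markov model, is exactly `2n` times the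
plug-in estimator of the directed information rate. -/
theorem stmt15 {Ω A B : Type*} [MeasurableSpace Ω]
    [MeasurableSpace A] [MeasurableSpace B]
    [Fintype A] [Fintype B] [DecidableEq A] [DecidableEq B]
    (μ : Measure Ω) [IsProbabilityMeasure μ]
    (k : ℕ) (hk : 0 < k)
    (Z : ℕ → Ω → A × B)
    (Q : (Fin k → A × B) → A × B → ℝ)
    (hZmeas : ∀ i, Measurable (Z i))
    (hQpos : ∀ u s, 0 < Q u s) (hQrow : ∀ u, ∑ s, Q u s = 1)
    (hM : IsMarkovK μ Z k Q)
    (n : ℕ) (hn : 0 < n) (ω : Ω) :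
    2 * (sSup {L : ℝ | ∃ Q' : (Fin k → A × B) → A × B → ℝ,
            (∀ u s, 0 < Q' u s) ∧ (∀ u, ∑ s, Q' u s = 1) ∧
            L = ∑ i ∈ Finset.range n,
              Real.log (Q' (fun j : Fin k => Z (i + (j : ℕ)) ω) (Z (i + k) ω))}
        - sSup {L : ℝ | ∃ (Qx : (Fin k → A × B) → A → ℝ) (Qy : (Fin k → B) → B → ℝ),
            (∀ u a, 0 < Qx u a) ∧ (∀ u, ∑ a, Qx u a = 1) ∧
            (∀ v b, 0 < Qy v b) ∧ (∀ v, ∑ b, Qy v b = 1) ∧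
            L = ∑ i ∈ Finset.range n,
              Real.log (Qx (fun j : Fin k => Z (i + (j : ℕ)) ω) (Z (i + k) ω).1
                * Qy (fun j : Fin k => (Z (i + (j : ℕ)) ω).2) (Z (i + k) ω).2)})
      = 2 * n * pluginDI (fun i => Z i ω) k n := by
  classical
  haveI : Nonempty A := ⟨(Z 0 ω).1⟩
  haveI : Nonempty B := ⟨(Z 0 ω).2⟩
  have hn' : (n:ℝ) ≠ 0 := Nat.cast_ne_zero.2 hn.ne'
  -- the three maximized log-likelihoods
  have hΘ : sSup {L : ℝ | ∃ Q' : (Fin k → A × B) → A × B → ℝ,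
        (∀ u s, 0 < Q' u s) ∧ (∀ u, ∑ s, Q' u s = 1) ∧
        L = ∑ i ∈ Finset.range n,
          Real.log (Q' (fun j : Fin k => Z (i + (j : ℕ)) ω) (Z (i + k) ω))}
      = ∑ i ∈ Finset.range n,
          Real.log (Stmt15Aux.cnt n (fun i' => fun j : Fin k => Z (i' + (j:ℕ)) ω)
              (fun i' => Z (i' + k) ω)
              (fun j : Fin k => Z (i + (j:ℕ)) ω) (Z (i + k) ω)
            / Stmt15Aux.mar n (fun i' => fun j : Fin k => Z (i' + (j:ℕ)) ω)
              (fun j : Fin k => Z (i + (j:ℕ)) ω)) :=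
    Stmt15Aux.supLogLik n _ _
  have hX : sSup {L : ℝ | ∃ Qx : (Fin k → A × B) → A → ℝ,
        (∀ u a, 0 < Qx u a) ∧ (∀ u, ∑ a, Qx u a = 1) ∧
        L = ∑ i ∈ Finset.range n,
          Real.log (Qx (fun j : Fin k => Z (i + (j : ℕ)) ω) (Z (i + k) ω).1)}
      = ∑ i ∈ Finset.range n,
          Real.log (Stmt15Aux.cnt n (fun i' => fun j : Fin k => Z (i' + (j:ℕ)) ω)
              (fun i' => (Z (i' + k) ω).1)
              (fun j : Fin k => Z (i + (j:ℕ)) ω) ((Z (i + k) ω).1)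
            / Stmt15Aux.mar n (fun i' => fun j : Fin k => Z (i' + (j:ℕ)) ω)
              (fun j : Fin k => Z (i + (j:ℕ)) ω)) :=
    Stmt15Aux.supLogLik n _ _
  have hY : sSup {L : ℝ | ∃ Qy : (Fin k → B) → B → ℝ,
        (∀ v b, 0 < Qy v b) ∧ (∀ v, ∑ b, Qy v b = 1) ∧
        L = ∑ i ∈ Finset.range n,
          Real.log (Qy (fun j : Fin k => (Z (i + (j : ℕ)) ω).2) (Z (i + k) ω).2)}
      = ∑ i ∈ Finset.range n,
          Real.log (Stmt15Aux.cnt n (fun i' => fun j : Fin k => (Z (i' + (j:ℕ)) ω).2)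
              (fun i' => (Z (i' + k) ω).2)
              (fun j : Fin k => (Z (i + (j:ℕ)) ω).2) ((Z (i + k) ω).2)
            / Stmt15Aux.mar n (fun i' => fun j : Fin k => (Z (i' + (j:ℕ)) ω).2)
              (fun j : Fin k => (Z (i + (j:ℕ)) ω).2)) :=
    Stmt15Aux.supLogLik n _ _
  -- splitting the factorized model's supremum
  have hxne : Set.Nonempty {L : ℝ | ∃ Qx : (Fin k → A × B) → A → ℝ,
        (∀ u a, 0 < Qx u a) ∧ (∀ u, ∑ a, Qx u a = 1) ∧
        L = ∑ i ∈ Finset.range n,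
          Real.log (Qx (fun j : Fin k => Z (i + (j : ℕ)) ω) (Z (i + k) ω).1)} :=
    Stmt15Aux.logLikSet_nonempty n _ _
  have hxbdd : BddAbove {L : ℝ | ∃ Qx : (Fin k → A × B) → A → ℝ,
        (∀ u a, 0 < Qx u a) ∧ (∀ u, ∑ a, Qx u a = 1) ∧
        L = ∑ i ∈ Finset.range n,
          Real.log (Qx (fun j : Fin k => Z (i + (j : ℕ)) ω) (Z (i + k) ω).1)} :=
    Stmt15Aux.logLikSet_bddAbove n _ _
  have hyne : Set.Nonempty {L : ℝ | ∃ Qy : (Fin k → B) → B → ℝ,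
        (∀ v b, 0 < Qy v b) ∧ (∀ v, ∑ b, Qy v b = 1) ∧
        L = ∑ i ∈ Finset.range n,
          Real.log (Qy (fun j : Fin k => (Z (i + (j : ℕ)) ω).2) (Z (i + k) ω).2)} :=
    Stmt15Aux.logLikSet_nonempty n _ _
  have hybdd : BddAbove {L : ℝ | ∃ Qy : (Fin k → B) → B → ℝ,
        (∀ v b, 0 < Qy v b) ∧ (∀ v, ∑ b, Qy v b = 1) ∧
        L = ∑ i ∈ Finset.range n,
          Real.log (Qy (fun j : Fin k => (Z (i + (j : ℕ)) ω).2) (Z (i + k) ω).2)} :=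
    Stmt15Aux.logLikSet_bddAbove n _ _
  have hsplit : {L : ℝ | ∃ (Qx : (Fin k → A × B) → A → ℝ) (Qy : (Fin k → B) → B → ℝ),
        (∀ u a, 0 < Qx u a) ∧ (∀ u, ∑ a, Qx u a = 1) ∧
        (∀ v b, 0 < Qy v b) ∧ (∀ v, ∑ b, Qy v b = 1) ∧
        L = ∑ i ∈ Finset.range n,
          Real.log (Qx (fun j : Fin k => Z (i + (j : ℕ)) ω) (Z (i + k) ω).1
            * Qy (fun j : Fin k => (Z (i + (j : ℕ)) ω).2) (Z (i + k) ω).2)}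
      = {L : ℝ | ∃ Qx : (Fin k → A × B) → A → ℝ,
          (∀ u a, 0 < Qx u a) ∧ (∀ u, ∑ a, Qx u a = 1) ∧
          L = ∑ i ∈ Finset.range n,
            Real.log (Qx (fun j : Fin k => Z (i + (j : ℕ)) ω) (Z (i + k) ω).1)}
        + {L : ℝ | ∃ Qy : (Fin k → B) → B → ℝ,
          (∀ v b, 0 < Qy v b) ∧ (∀ v, ∑ b, Qy v b = 1) ∧
          L = ∑ i ∈ Finset.range n,
            Real.log (Qy (fun j : Fin k => (Z (i + (j : ℕ)) ω).2) (Z (i + k) ω).2)} := by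
    ext L
    simp only [Set.mem_add, Set.mem_setOf_eq]
    constructor
    · rintro ⟨Qx, Qy, h1, h2, h3, h4, rfl⟩
      refine ⟨_, ⟨Qx, h1, h2, rfl⟩, _, ⟨Qy, h3, h4, rfl⟩, ?_⟩
      rw [← Finset.sum_add_distrib]
      exact Finset.sum_congr rfl fun i _ => (Real.log_mul (h1 _ _).ne' (h3 _ _).ne').symm
    · rintro ⟨x, ⟨Qx, h1, h2, rfl⟩, y, ⟨Qy, h3, h4, rfl⟩, rfl⟩
      refine ⟨Qx, Qy, h1, h2, h3, h4, ?_⟩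
      rw [← Finset.sum_add_distrib]
      exact Finset.sum_congr rfl fun i _ => (Real.log_mul (h1 _ _).ne' (h3 _ _).ne').symm
  rw [hΘ, hsplit, csSup_add hxne hxbdd hyne hybdd, hX, hY]
  -- identify `n * pluginDI` with a sum of per-sample log-ratios
  have hplug : (n:ℝ) * pluginDI (fun i => Z i ω) k n
      = ∑ i ∈ Finset.range n,
          logRatio k (empBlock (fun i => Z i ω) (k+1) n)
            (fun j : Fin (k+1) => Z (i + (j:ℕ)) ω) := by
    rw [pluginDI, condMIk, Finset.mul_sum,
      ← Stmt15Aux.sum_fiber1 n (fun i => fun j : Fin (k+1) => Z (i + (j:ℕ)) ω)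
        (fun w => logRatio k (empBlock (fun i => Z i ω) (k+1) n) w)]
    refine Finset.sum_congr rfl fun w _ => ?_
    rw [← mul_assoc]
    congr 1
    rw [n_mul_empBlock _ k n hn]
    exact Finset.sum_congr rfl fun i _ => if_congr (by simp [funext_iff]) rfl rfl
  rw [← Finset.sum_add_distrib, ← Finset.sum_sub_distrib]
  have hsum : ∑ i ∈ Finset.range n,
        (Real.log (Stmt15Aux.cnt n (fun i' => fun j : Fin k => Z (i' + (j:ℕ)) ω)
              (fun i' => Z (i' + k) ω)
              (fun j : Fin k => Z (i + (j:ℕ)) ω) (Z (i + k) ω)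
            / Stmt15Aux.mar n (fun i' => fun j : Fin k => Z (i' + (j:ℕ)) ω)
              (fun j : Fin k => Z (i + (j:ℕ)) ω))
          - (Real.log (Stmt15Aux.cnt n (fun i' => fun j : Fin k => Z (i' + (j:ℕ)) ω)
                (fun i' => (Z (i' + k) ω).1)
                (fun j : Fin k => Z (i + (j:ℕ)) ω) ((Z (i + k) ω).1)
              / Stmt15Aux.mar n (fun i' => fun j : Fin k => Z (i' + (j:ℕ)) ω)
                (fun j : Fin k => Z (i + (j:ℕ)) ω))
            + Real.log (Stmt15Aux.cnt n (fun i' => fun j : Fin k => (Z (i' + (j:ℕ)) ω).2)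
                (fun i' => (Z (i' + k) ω).2)
                (fun j : Fin k => (Z (i + (j:ℕ)) ω).2) ((Z (i + k) ω).2)
              / Stmt15Aux.mar n (fun i' => fun j : Fin k => (Z (i' + (j:ℕ)) ω).2)
                (fun j : Fin k => (Z (i + (j:ℕ)) ω).2))))
      = (n:ℝ) * pluginDI (fun i => Z i ω) k n := by
    rw [hplug]
    exact Finset.sum_congr rfl fun i hi =>
      per_i (fun i => Z i ω) k n hn i (Finset.mem_range.1 hi)
  rw [hsum]
  ring

end
end

section
/- Let X_0, X_1, …, X_n be a sample from a finite alphabet A, with bivariate empirical distribution P̂_{X_0X_1,n}(a,a') = (1/n) Σ_{i=1}^n 1{X_{i−1}=a, X_i=a'} and first-coordinate marginal P̂_{X_0,n}. Then the maximum over all strictly positive transition matrices Q on A of the conditional log-likelihood Σ_{i=1}^n log Q(X_i|X_{i−1}) equals n[ H(P̂_{X_0,n}) − H(P̂_{X_0X_1,n}) ], and is attained when Q(a'|a) = P̂_{X_0X_1,n}(a,a') / P̂_{X_0,n}(a) for all a with P̂_{X_0,n}(a) > 0. -/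
open MeasureTheory ProbabilityTheory Filter Finset Topology
open scoped NNReal

noncomputable section

namespace S16

set_option linter.unusedSectionVars false

variable {A : Type*} [Fintype A] [DecidableEq A]

def cnt (x : ℕ → A) (n : ℕ) (a a' : A) : ℝ :=
  ∑ i ∈ Finset.range n, if x i = a ∧ x (i + 1) = a' then (1 : ℝ) else 0

lemma cnt_nonneg (x : ℕ → A) (n : ℕ) (a a' : A) : 0 ≤ cnt x n a a' :=
  Finset.sum_nonneg fun _ _ => by positivity

lemma n_mul_empPair (x : ℕ → A) {n : ℕ} (hn : 0 < n) (a a' : A) :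
    (n : ℝ) * empPair x n a a' = cnt x n a a' := by
  rw [empPair, mul_div_cancel₀]
  · rfl
  · exact_mod_cast hn.ne'

lemma empPair_nonneg (x : ℕ → A) (n : ℕ) (a a' : A) :
    0 ≤ empPair x n a a' :=
  div_nonneg (cnt_nonneg x n a a') (Nat.cast_nonneg n)

lemma empFst_nonneg (x : ℕ → A) (n : ℕ) (a : A) :
    0 ≤ empFst x n a :=
  Finset.sum_nonneg fun a' _ => empPair_nonneg x n a a'

lemma empPair_le_empFst (x : ℕ → A) (n : ℕ) (a a' : A) :
    empPair x n a a' ≤ empFst x n a :=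
  Finset.single_le_sum (fun b _ => empPair_nonneg x n a b) (mem_univ a')

lemma sum_cnt_row (x : ℕ → A) {n : ℕ} (hn : 0 < n) (a : A) :
    ∑ a', cnt x n a a' = (n : ℝ) * empFst x n a := by
  rw [empFst, Finset.mul_sum]
  exact Finset.sum_congr rfl fun a' _ => (n_mul_empPair x hn a a').symm

lemma sumEval (x : ℕ → A) (n : ℕ) (f : A → A → ℝ) :
    ∑ i ∈ Finset.range n, f (x i) (x (i + 1))
      = ∑ a, ∑ a', cnt x n a a' * f a a' := by
  have h : ∀ i, f (x i) (x (i + 1))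
      = ∑ a, ∑ a', if x i = a ∧ x (i + 1) = a' then f a a' else 0 := by
    intro i
    simp [ite_and, Finset.sum_ite_eq, Finset.sum_ite_eq']
  calc ∑ i ∈ Finset.range n, f (x i) (x (i + 1))
      = ∑ i ∈ Finset.range n, ∑ a, ∑ a', if x i = a ∧ x (i + 1) = a' then f a a' else 0 :=
        Finset.sum_congr rfl fun i _ => h i
    _ = ∑ a, ∑ i ∈ Finset.range n, ∑ a', if x i = a ∧ x (i + 1) = a' then f a a' else 0 :=
        Finset.sum_comm
    _ = ∑ a, ∑ a', ∑ i ∈ Finset.range n, if x i = a ∧ x (i + 1) = a' then f a a' else 0 :=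
        Finset.sum_congr rfl fun a _ => Finset.sum_comm
    _ = ∑ a, ∑ a', cnt x n a a' * f a a' := by
        apply Finset.sum_congr rfl; intro a _
        apply Finset.sum_congr rfl; intro a' _
        rw [cnt, Finset.sum_mul]
        apply Finset.sum_congr rfl; intro i _
        by_cases hc : x i = a ∧ x (i + 1) = a' <;> simp [hc]

lemma V_eq (x : ℕ → A) {n : ℕ} (hn : 0 < n) :
    (n : ℝ) * (ent (empFst x n) - ent (fun p : A × A => empPair x n p.1 p.2))
      = ∑ a, ∑ a', cnt x n a a' *
          (Real.log (empPair x n a a') - Real.log (empFst x n a)) := by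
  have hP := n_mul_empPair x hn
  have hR := sum_cnt_row x hn
  simp only [ent, Fintype.sum_prod_type, Real.negMulLog, mul_sub, Finset.mul_sum,
    ← Finset.sum_sub_distrib]
  apply Finset.sum_congr rfl
  intro a _
  rw [Finset.sum_sub_distrib, ← Finset.sum_mul, hR a]
  have h1 : ∀ a' ∈ (univ : Finset A),
      (n : ℝ) * (-empPair x n a a' * Real.log (empPair x n a a'))
        = -(cnt x n a a' * Real.log (empPair x n a a')) := fun a' _ => by
    rw [← hP a a']; ring
  rw [Finset.sum_congr rfl h1, Finset.sum_neg_distrib]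
  ring

end S16

namespace S16

variable {A : Type*} [Fintype A] [DecidableEq A]

lemma empPair_pos_of_cnt (x : ℕ → A) {n : ℕ} (hn : 0 < n) {a a' : A}
    (h : cnt x n a a' ≠ 0) : 0 < empPair x n a a' := by
  have h1 : 0 < cnt x n a a' := lt_of_le_of_ne (cnt_nonneg x n a a') (Ne.symm h)
  rw [← n_mul_empPair x hn a a'] at h1
  have hn' : (0:ℝ) < n := by exact_mod_cast hn
  nlinarith [empPair_nonneg x n a a']

lemma empFst_pos_of_cnt (x : ℕ → A) {n : ℕ} (hn : 0 < n) {a a' : A}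
    (h : cnt x n a a' ≠ 0) : 0 < empFst x n a :=
  lt_of_lt_of_le (empPair_pos_of_cnt x hn h) (empPair_le_empFst x n a a')

lemma sum_cnt_congr (x : ℕ → A) (n : ℕ) (f g : A → A → ℝ)
    (h : ∀ a a', cnt x n a a' ≠ 0 → f a a' = g a a') :
    ∑ a, ∑ a', cnt x n a a' * f a a' = ∑ a, ∑ a', cnt x n a a' * g a a' := by
  apply Finset.sum_congr rfl; intro a _
  apply Finset.sum_congr rfl; intro a' _
  by_cases hc : cnt x n a a' = 0
  · simp [hc]
  · rw [h a a' hc]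

/-- The attainment lemma -/
lemma attained (x : ℕ → A) {n : ℕ} (hn : 0 < n) (Q : A → A → ℝ)
    (hQ : ∀ a a', 0 < empFst x n a → Q a a' = empPair x n a a' / empFst x n a) :
    ∑ i ∈ Finset.range n, Real.log (Q (x i) (x (i + 1)))
      = (n : ℝ) * (ent (empFst x n) - ent (fun p : A × A => empPair x n p.1 p.2)) := by
  rw [sumEval x n (fun a a' => Real.log (Q a a')), V_eq x hn]
  apply sum_cnt_congr
  intro a a' hc
  have hF := empFst_pos_of_cnt x hn hc
  have hPp := empPair_pos_of_cnt x hn hc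
  rw [hQ a a' hF, Real.log_div hPp.ne' hF.ne']

/-- Upper bound lemma -/
lemma upper (x : ℕ → A) {n : ℕ} (hn : 0 < n) (Q : A → A → ℝ)
    (hpos : ∀ a a', 0 < Q a a') (hrow : ∀ a, ∑ a', Q a a' = 1) :
    ∑ i ∈ Finset.range n, Real.log (Q (x i) (x (i + 1)))
      ≤ (n : ℝ) * (ent (empFst x n) - ent (fun p : A × A => empPair x n p.1 p.2)) := by
  rw [sumEval x n (fun a a' => Real.log (Q a a')), V_eq x hn]
  rw [← sub_nonneg, ← Finset.sum_sub_distrib]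
  have key : ∀ a, ∑ a', (cnt x n a a' *
        (Real.log (empPair x n a a') - Real.log (empFst x n a))
      - cnt x n a a' * Real.log (Q a a')) ≥ 0 := by
    intro a
    have hterm : ∀ a' ∈ (univ : Finset A),
        (n : ℝ) * (empPair x n a a' - Q a a' * empFst x n a)
          ≤ cnt x n a a' * (Real.log (empPair x n a a') - Real.log (empFst x n a))
            - cnt x n a a' * Real.log (Q a a') := by
      intro a' _
      by_cases hc : cnt x n a a' = 0
      · have hP0 : empPair x n a a' = 0 := by
          have := n_mul_empPair x hn a a'
          rw [hc] at this
          have hn' : (n:ℝ) ≠ 0 := by exact_mod_cast hn.ne'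
          rcases mul_eq_zero.mp this with h | h
          · exact absurd h hn'
          · exact h
        rw [hc, hP0]
        have h0 : (0:ℝ) ≤ (n:ℝ) * (Q a a' * empFst x n a) := by
          have := (hpos a a').le
          have := empFst_nonneg x n a
          positivity
        simp only [zero_mul, sub_zero, zero_sub]
        nlinarith
      · have hF := empFst_pos_of_cnt x hn hc
        have hPp := empPair_pos_of_cnt x hn hc
        have hQp := hpos a a'
        have hcnt : cnt x n a a' = (n:ℝ) * empPair x n a a' := (n_mul_empPair x hn a a').symm
        have ht : 0 < Q a a' * empFst x n a / empPair x n a a' := by positivity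
        have hlog := Real.log_le_sub_one_of_pos ht
        have hlq : Real.log (Q a a' * empFst x n a / empPair x n a a')
            = Real.log (Q a a') + Real.log (empFst x n a) - Real.log (empPair x n a a') := by
          rw [Real.log_div (by positivity) hPp.ne', Real.log_mul hQp.ne' hF.ne']
        rw [hlq] at hlog
        have hcn : 0 < cnt x n a a' :=
          lt_of_le_of_ne (cnt_nonneg x n a a') (Ne.symm hc)
        have := mul_le_mul_of_nonneg_left hlog hcn.le
        have hid : cnt x n a a' * (Q a a' * empFst x n a / empPair x n a a' - 1)
            = (n:ℝ) * (Q a a' * empFst x n a - empPair x n a a') := by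
          rw [hcnt]; field_simp
        linarith
    have hsum : ∑ a', (n : ℝ) * (empPair x n a a' - Q a a' * empFst x n a) = 0 := by
      rw [← Finset.mul_sum, Finset.sum_sub_distrib, ← Finset.sum_mul, hrow a, ← empFst]
      ring
    have := Finset.sum_le_sum hterm
    rw [hsum] at this
    exact this
  apply Finset.sum_nonneg
  intro a _
  rw [← Finset.sum_sub_distrib]
  exact key a

lemma sum_cnt_total (x : ℕ → A) {n : ℕ} (hn : 0 < n) :
    ∑ a, ∑ a', cnt x n a a' = (n : ℝ) := by
  have h := sumEval x n (fun _ _ => (1:ℝ))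
  simp only [mul_one, Finset.sum_const, Finset.card_range, nsmul_eq_mul] at h
  exact h.symm

end S16



/-- Maximum-likelihood computation: the supremum, over all strictly positive
transition matrices `Q`, of the conditional log-likelihood
`∑_{i=1}^n log Q(x_i | x_{i−1})` equals `n [H(P̂_{X₀,n}) − H(P̂_{X₀X₁,n})]`, and
this value is attained by any transition matrix whose rows at states of positive
empirical mass coincide with the empirical conditional distribution. -/
theorem stmt16 {A : Type*} [Fintype A] [DecidableEq A] [Nonempty A]
    (x : ℕ → A) (n : ℕ) (hn : 0 < n) :
    IsLUB {L : ℝ | ∃ Q : A → A → ℝ, (∀ a a', 0 < Q a a') ∧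
        (∀ a, ∑ a', Q a a' = 1) ∧
        L = ∑ i ∈ Finset.range n, Real.log (Q (x i) (x (i + 1)))}
      ((n : ℝ) * (ent (empFst x n) - ent (fun p : A × A => empPair x n p.1 p.2)))
    ∧ ∀ Q : A → A → ℝ, (∀ a a', 0 ≤ Q a a') → (∀ a, ∑ a', Q a a' = 1) →
        (∀ a a', 0 < empFst x n a → Q a a' = empPair x n a a' / empFst x n a) →
        ∑ i ∈ Finset.range n, Real.log (Q (x i) (x (i + 1)))
          = (n : ℝ) * (ent (empFst x n) - ent (fun p : A × A => empPair x n p.1 p.2)) := by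
  refine ⟨⟨?_, ?_⟩, ?_⟩
  · rintro L ⟨Q, hpos, hrow, rfl⟩
    exact S16.upper x hn Q hpos hrow
  · intro b hb
    apply le_of_forall_pos_le_add
    intro δ hδ
    have hn' : (0:ℝ) < n := by exact_mod_cast hn
    set t : ℝ := Real.exp (-(δ / n)) with htdef
    have ht0 : 0 < t := Real.exp_pos _
    have ht1 : t < 1 := by
      apply Real.exp_lt_one_iff.mpr
      have : 0 < δ / n := by positivity
      linarith
    have hcard : (0:ℝ) < (Fintype.card A : ℝ) := by
      exact_mod_cast Fintype.card_pos
    set R : A → A → ℝ := fun a a' =>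
      if 0 < empFst x n a then empPair x n a a' / empFst x n a
      else 1 / (Fintype.card A : ℝ) with hRdef
    have hRnn : ∀ a a', 0 ≤ R a a' := by
      intro a a'
      rw [hRdef]
      dsimp only
      split_ifs with h
      · exact div_nonneg (S16.empPair_nonneg x n a a') h.le
      · positivity
    have hRsum : ∀ a, ∑ a', R a a' = 1 := by
      intro a
      rw [hRdef]
      dsimp only
      split_ifs with h
      · rw [← Finset.sum_div, ← empFst, div_self h.ne']
      · rw [Finset.sum_const, Finset.card_univ, nsmul_eq_mul]
        field_simp
    set Q : A → A → ℝ := fun a a' => t * R a a' + (1 - t) / (Fintype.card A : ℝ) with hQdef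
    have hQpos : ∀ a a', 0 < Q a a' := by
      intro a a'
      rw [hQdef]
      dsimp only
      have := hRnn a a'
      have h1 : 0 < (1 - t) / (Fintype.card A : ℝ) := by
        apply div_pos (by linarith) hcard
      nlinarith
    have hQrow : ∀ a, ∑ a', Q a a' = 1 := by
      intro a
      rw [hQdef]
      dsimp only
      rw [Finset.sum_add_distrib, ← Finset.mul_sum, hRsum a, Finset.sum_const,
        Finset.card_univ, nsmul_eq_mul]
      field_simp
      ring
    have hmem : (∑ i ∈ Finset.range n, Real.log (Q (x i) (x (i + 1)))) ∈
        {L : ℝ | ∃ Q : A → A → ℝ, (∀ a a', 0 < Q a a') ∧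
          (∀ a, ∑ a', Q a a' = 1) ∧
          L = ∑ i ∈ Finset.range n, Real.log (Q (x i) (x (i + 1)))} :=
      ⟨Q, hQpos, hQrow, rfl⟩
    have hle := hb hmem
    have hlow : (n : ℝ) * (ent (empFst x n) - ent (fun p : A × A => empPair x n p.1 p.2))
        + (n : ℝ) * Real.log t
        ≤ ∑ i ∈ Finset.range n, Real.log (Q (x i) (x (i + 1))) := by
      rw [S16.sumEval x n (fun a a' => Real.log (Q a a'))]
      have e1 : ∀ a ∈ (univ : Finset A), ∑ a', S16.cnt x n a a' *
            (Real.log t + (Real.log (empPair x n a a') - Real.log (empFst x n a)))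
          = (∑ a', S16.cnt x n a a') * Real.log t
            + ∑ a', S16.cnt x n a a' *
              (Real.log (empPair x n a a') - Real.log (empFst x n a)) := by
        intro a _
        rw [Finset.sum_mul, ← Finset.sum_add_distrib]
        exact Finset.sum_congr rfl fun a' _ => by ring
      have e2 : (n : ℝ) * (ent (empFst x n) - ent (fun p : A × A => empPair x n p.1 p.2))
          + (n : ℝ) * Real.log t
          = ∑ a, ∑ a', S16.cnt x n a a' *
              (Real.log t + (Real.log (empPair x n a a') - Real.log (empFst x n a))) := by
        rw [Finset.sum_congr rfl e1, Finset.sum_add_distrib, ← Finset.sum_mul,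
          S16.sum_cnt_total x hn, ← S16.V_eq x hn]
        ring
      rw [e2]
      apply Finset.sum_le_sum
      intro a _
      apply Finset.sum_le_sum
      intro a' _
      by_cases hc : S16.cnt x n a a' = 0
      · simp [hc]
      · have hF := S16.empFst_pos_of_cnt x hn hc
        have hPp := S16.empPair_pos_of_cnt x hn hc
        apply mul_le_mul_of_nonneg_left _ (S16.cnt_nonneg x n a a')
        have hRv : R a a' = empPair x n a a' / empFst x n a := by
          rw [hRdef]; dsimp only; rw [if_pos hF]
        have hQge : t * (empPair x n a a' / empFst x n a) ≤ Q a a' := by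
          rw [hQdef]; dsimp only; rw [hRv]
          have : 0 ≤ (1 - t) / (Fintype.card A : ℝ) := by
            apply div_nonneg (by linarith) hcard.le
          linarith
        have hlog : Real.log (t * (empPair x n a a' / empFst x n a)) ≤ Real.log (Q a a') :=
          Real.log_le_log (by positivity) hQge
        rw [Real.log_mul ht0.ne' (by positivity), Real.log_div hPp.ne' hF.ne'] at hlog
        exact hlog
    have hlt : (n : ℝ) * Real.log t = -δ := by
      rw [htdef, Real.log_exp]
      field_simp
    linarith
  · intro Q h0 hrow hQ
    exact S16.attained x hn Q hQ

end
end
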